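/- arXiv:2309.06929 — 16 statements merged into one kernel-verified Lean document; each statement's English description precedes it below -/
import Mathlib

section
/- Let g_1,…,g_m ∈ ℝ^n. Define φ(d) = max_{i∈{1,…,m}} ⟨g_i, d⟩ + (1/2)‖d‖² for d ∈ ℝ^n and ψ(λ) = (1/2)‖Σ_{i=1}^m λ_i g_i‖² for λ ∈ Δ_m. Then min_{d∈ℝ^n} φ(d) = − min_{λ∈Δ_m} ψ(λ), and for any λ* minimizing ψ over Δ_m, the vector d* = −Σ_{i=1}^m λ*_i g_i is the unique minimizer of φ over ℝ^n. -/
open scoped RealInnerProductSpace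

/-- Maximum of a function over the (nonempty) finite index type `Fin m`. -/
noncomputable def fmax {m : ℕ} [NeZero m] (f : Fin m → ℝ) : ℝ :=
  Finset.univ.sup' Finset.univ_nonempty f

/-- Duality for the steepest-descent subproblem: with
`φ d = max_i ⟨g i, d⟩ + ‖d‖²/2` and `ψ λ = ‖∑ λ_i g_i‖²/2`, for any minimizer `λ*` of `ψ`
over the unit simplex, the vector `d* = −∑ λ*_i g_i` is the unique minimizer of `φ` over
`ℝ^n`, and `min φ = − min ψ` (i.e. `φ d* = −ψ λ*`). -/
theorem stmt0 {n m : ℕ} [NeZero m] (g : Fin m → EuclideanSpace ℝ (Fin n))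
    (φ : EuclideanSpace ℝ (Fin n) → ℝ)
    (hφ : ∀ d, φ d = (fmax fun i => ⟪g i, d⟫) + ‖d‖ ^ 2 / 2)
    (ψ : (Fin m → ℝ) → ℝ)
    (hψ : ∀ lam, ψ lam = ‖∑ i, lam i • g i‖ ^ 2 / 2)
    (lamStar : Fin m → ℝ) (hpos : ∀ i, 0 ≤ lamStar i) (hsum : ∑ i, lamStar i = 1)
    (hlamMin : ∀ lam : Fin m → ℝ, (∀ i, 0 ≤ lam i) → ∑ i, lam i = 1 → ψ lamStar ≤ ψ lam)
    (dStar : EuclideanSpace ℝ (Fin n)) (hd : dStar = -∑ i, lamStar i • g i) :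
    φ dStar = -ψ lamStar ∧ (∀ d, φ dStar ≤ φ d) ∧
      ∀ d, d ≠ dStar → φ dStar < φ d := by
  set G : EuclideanSpace ℝ (Fin n) := ∑ i, lamStar i • g i with hG
  -- key optimality condition
  have key : ∀ i, ‖G‖ ^ 2 ≤ ⟪g i, G⟫ := by
    intro i
    by_contra hcon
    push_neg at hcon
    set b : ℝ := ⟪g i, G⟫ - ‖G‖ ^ 2 with hb
    have hbneg : b < 0 := by simp only [hb]; linarith
    set a : ℝ := ‖g i - G‖ ^ 2 with ha
    have ha0 : 0 ≤ a := sq_nonneg _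
    set t : ℝ := min 1 (-b / (a + 1)) with ht
    have ht0 : 0 < t := lt_min one_pos (div_pos (by linarith) (by linarith))
    have ht1 : t ≤ 1 := min_le_left _ _
    have htb : t * (a + 1) ≤ -b := by
      have := min_le_right (1:ℝ) (-b / (a + 1))
      calc t * (a + 1) ≤ (-b / (a + 1)) * (a + 1) := by
            apply mul_le_mul_of_nonneg_right _ (by linarith)
            exact this
        _ = -b := by field_simp
    set lam : Fin m → ℝ := fun j => (1 - t) * lamStar j + t * (if j = i then 1 else 0)
      with hlam
    have hfeas1 : ∀ j, 0 ≤ lam j := by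
      intro j
      have h1 : (0:ℝ) ≤ 1 - t := by linarith
      by_cases hji : j = i
      · simp only [hlam, hji]
        norm_num
        nlinarith [hpos i]
      · simp only [hlam, if_neg hji, mul_zero, add_zero]
        exact mul_nonneg h1 (hpos j)
    have hfeas2 : ∑ j, lam j = 1 := by
      simp only [hlam]
      rw [Finset.sum_add_distrib, ← Finset.mul_sum, hsum, ← Finset.mul_sum]
      simp
    have hvec : ∑ j, lam j • g j = G + t • (g i - G) := by
      simp only [hlam, add_smul, mul_smul]
      rw [Finset.sum_add_distrib, ← Finset.smul_sum, ← Finset.smul_sum]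
      have hδ : ∑ j, (if j = i then (1:ℝ) else 0) • g j = g i := by
        rw [Finset.sum_eq_single i]
        · simp
        · intro j _ hji; simp [hji]
        · intro h; exact absurd (Finset.mem_univ i) h
      rw [hδ, smul_sub, sub_smul]
      simp only [one_smul]
      abel
    have hexp : ψ lam = ψ lamStar + t * b + t ^ 2 * a / 2 := by
      rw [hψ, hψ, hvec, ← hG]
      have hns : ‖G + t • (g i - G)‖ ^ 2
          = ‖G‖ ^ 2 + 2 * ⟪G, t • (g i - G)⟫ + ‖t • (g i - G)‖ ^ 2 :=
        norm_add_sq_real _ _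
      rw [hns]
      have h1 : ⟪G, t • (g i - G)⟫ = t * b := by
        rw [real_inner_smul_right, inner_sub_right, real_inner_self_eq_norm_sq, hb,
          real_inner_comm]
      have h2 : ‖t • (g i - G)‖ ^ 2 = t ^ 2 * a := by
        rw [norm_smul, mul_pow, ha]
        simp [sq_abs]
      rw [h1, h2]; ring
    have := hlamMin lam hfeas1 hfeas2
    rw [hexp] at this
    have hba : 0 ≤ b + t * a / 2 := by nlinarith
    nlinarith
  -- sum identity: ∑ λ_j ⟪g j, d⟫ = ⟪G, d⟫
  have hsumin : ∀ d : EuclideanSpace ℝ (Fin n), ∑ j, lamStar j * ⟪g j, d⟫ = ⟪G, d⟫ := by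
    intro d
    rw [hG, sum_inner]
    exact Finset.sum_congr rfl fun j _ => by rw [real_inner_smul_left]
  -- fmax lower bound via convex combination
  have hfmax_ge : ∀ d : EuclideanSpace ℝ (Fin n), ⟪G, d⟫ ≤ fmax fun i => ⟪g i, d⟫ := by
    intro d
    rw [← hsumin]
    calc ∑ j, lamStar j * ⟪g j, d⟫ ≤ ∑ j, lamStar j * fmax (fun i => ⟪g i, d⟫) := by
          apply Finset.sum_le_sum
          intro j _
          exact mul_le_mul_of_nonneg_left
            (Finset.le_sup' (fun i => ⟪g i, d⟫) (Finset.mem_univ j)) (hpos j)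
      _ = fmax fun i => ⟪g i, d⟫ := by rw [← Finset.sum_mul, hsum, one_mul]
  have hmaxstar : (fmax fun i => ⟪g i, dStar⟫) = -‖G‖ ^ 2 := by
    rw [hd]
    apply le_antisymm
    · apply Finset.sup'_le
      intro i _
      rw [inner_neg_right]
      linarith [key i]
    · have := hfmax_ge (-G)
      rw [inner_neg_right, real_inner_self_eq_norm_sq] at this
      linarith
  have hnd : ‖dStar‖ = ‖G‖ := by rw [hd, norm_neg]
  have hφstar : φ dStar = -‖G‖ ^ 2 / 2 := by
    rw [hφ, hmaxstar, hnd]; ring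
  have hquad : ∀ d, φ dStar + ‖d - dStar‖ ^ 2 / 2 ≤ φ d := by
    intro d
    rw [hφ d, hφstar]
    have h1 : ⟪G, d⟫ ≤ fmax fun i => ⟪g i, d⟫ := hfmax_ge d
    have h2 : ‖d - dStar‖ ^ 2 = ‖d‖ ^ 2 + 2 * ⟪d, G⟫ + ‖G‖ ^ 2 := by
      have : d - dStar = d + G := by rw [hd, sub_neg_eq_add]
      rw [this]
      exact norm_add_sq_real _ _
    rw [h2, real_inner_comm d G] at *
    linarith
  refine ⟨?_, ?_, ?_⟩
  · rw [hφstar, hψ, ← hG]; ring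
  · intro d
    have := hquad d
    nlinarith [sq_nonneg ‖d - dStar‖]
  · intro d hne
    have := hquad d
    have hpos' : 0 < ‖d - dStar‖ ^ 2 :=
      pow_pos (norm_sub_pos_iff.mpr hne) 2
    linarith
end

section
/- Let g_1,…,g_m ∈ ℝ^n and let d* be a minimizer over ℝ^n of d ↦ max_{i∈{1,…,m}} ⟨g_i, d⟩ + (1/2)‖d‖². Then ⟨g_i, d*⟩ ≤ −‖d*‖² for every i ∈ {1,…,m}. -/
open scoped RealInnerProductSpace

/-- If `d*` minimizes `d ↦ max_i ⟨g i, d⟩ + ‖d‖²/2` over `ℝ^n`, then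
`⟨g i, d*⟩ ≤ −‖d*‖²` for every `i`. -/
theorem stmt1 {n m : ℕ} [NeZero m] (g : Fin m → EuclideanSpace ℝ (Fin n))
    (dStar : EuclideanSpace ℝ (Fin n))
    (hmin : ∀ d : EuclideanSpace ℝ (Fin n),
      (fmax fun i => ⟪g i, dStar⟫) + ‖dStar‖ ^ 2 / 2 ≤
        (fmax fun i => ⟪g i, d⟫) + ‖d‖ ^ 2 / 2) :
    ∀ i, ⟪g i, dStar⟫ ≤ -‖dStar‖ ^ 2 := by
  set M : ℝ := fmax fun i => ⟪g i, dStar⟫ with hM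
  set s : ℝ := ‖dStar‖ ^ 2 with hs
  have hs0 : 0 ≤ s := by positivity
  -- key inequality for t ∈ [0,1)
  have key : ∀ t : ℝ, 0 ≤ t → t < 1 → M ≤ -(1 + t) * s / 2 := by
    intro t ht0 ht1
    have h := hmin (t • dStar)
    have hmax : (fmax fun i => ⟪g i, t • dStar⟫) = t * M := by
      have : (fun i : Fin m => ⟪g i, t • dStar⟫) = fun i => t * ⟪g i, dStar⟫ := by
        funext i; rw [real_inner_smul_right]
      rw [this, hM]
      unfold fmax
      exact (Finset.comp_sup'_eq_sup'_comp _ (fun x => t * x)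
        (fun x y => mul_max_of_nonneg x y ht0)).symm
    have hnorm : ‖t • dStar‖ ^ 2 = t ^ 2 * s := by
      rw [norm_smul, mul_pow, hs, Real.norm_eq_abs, sq_abs]
    rw [hmax, hnorm] at h
    nlinarith [mul_pos (sub_pos.mpr ht1) (sub_pos.mpr ht1), sq_nonneg (1 - t)]
  -- take the limit t → 1⁻
  have hMs : M ≤ -s := by
    have htend : Filter.Tendsto (fun t : ℝ => -(1 + t) * s / 2) (nhdsWithin 1 (Set.Iio 1))
        (nhds (-s)) := by
      have : Filter.Tendsto (fun t : ℝ => -(1 + t) * s / 2) (nhds 1)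
          (nhds (-(1 + 1) * s / 2)) := by
        apply Filter.Tendsto.div_const
        exact (((tendsto_const_nhds.add Filter.tendsto_id).neg).mul tendsto_const_nhds)
      have h2 : -(1 + 1 : ℝ) * s / 2 = -s := by ring
      rw [h2] at this
      exact this.mono_left nhdsWithin_le_nhds
    apply ge_of_tendsto htend
    filter_upwards [Ioo_mem_nhdsLT_of_mem (by norm_num : (1:ℝ) ∈ Set.Ioc 0 1)] with t ht
    exact key t ht.1.le ht.2
  intro i
  have : ⟪g i, dStar⟫ ≤ M := by
    rw [hM]; unfold fmax; exact Finset.le_sup' (fun j => ⟪g j, dStar⟫) (Finset.mem_univ i)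
  linarith
end

section
/- Let g_1,…,g_m ∈ ℝ^n, let λ* ∈ Δ_m be a minimizer over Δ_m of λ ↦ (1/2)‖Σ_{i=1}^m λ_i g_i‖², and set d* = −Σ_{i=1}^m λ*_i g_i. Then for every index i with λ*_i > 0 one has ⟨g_i, d*⟩ = −‖d*‖². -/
open scoped RealInnerProductSpace

/-- If `λ*` minimizes `λ ↦ ‖∑ λ_i g_i‖²/2` over the unit simplex and
`d* = −∑ λ*_i g_i`, then `⟨g i, d*⟩ = −‖d*‖²` for every index `i` with `λ*_i > 0`. -/
theorem stmt2 {n m : ℕ} (g : Fin m → EuclideanSpace ℝ (Fin n))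
    (lamStar : Fin m → ℝ) (hpos : ∀ i, 0 ≤ lamStar i) (hsum : ∑ i, lamStar i = 1)
    (hmin : ∀ lam : Fin m → ℝ, (∀ i, 0 ≤ lam i) → ∑ i, lam i = 1 →
      ‖∑ i, lamStar i • g i‖ ^ 2 / 2 ≤ ‖∑ i, lam i • g i‖ ^ 2 / 2)
    (dStar : EuclideanSpace ℝ (Fin n)) (hd : dStar = -∑ i, lamStar i • g i) :
    ∀ i, 0 < lamStar i → ⟪g i, dStar⟫ = -‖dStar‖ ^ 2 := by
  intro i hi
  set G : EuclideanSpace ℝ (Fin n) := ∑ j, lamStar j • g j with hG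
  -- first-order optimality: ⟪G, g j⟫ ≥ ‖G‖² for all j
  have key : ∀ j, ‖G‖ ^ 2 ≤ ⟪G, g j⟫ := by
    intro j
    by_contra hcon
    push_neg at hcon
    set c : ℝ := ⟪G, g j - G⟫ with hc
    have hc0 : c < 0 := by
      have h1 : c = ⟪G, g j⟫ - ‖G‖ ^ 2 := by
        rw [hc, inner_sub_right, real_inner_self_eq_norm_sq]
      linarith
    set N : ℝ := ‖g j - G‖ ^ 2 with hN
    have hN0 : 0 ≤ N := by positivity
    set t : ℝ := min 1 (-c / (N + 1)) with ht
    have ht0 : 0 < t := by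
      apply lt_min one_pos
      apply div_pos (by linarith) (by linarith)
    have ht1 : t ≤ 1 := min_le_left _ _
    have htc : t * (N + 1) ≤ -c := by
      have := min_le_right 1 (-c / (N + 1))
      rw [le_div_iff₀ (by linarith : (0:ℝ) < N + 1)] at this
      linarith
    -- the perturbed point
    set lam : Fin m → ℝ := fun k => (1 - t) * lamStar k + t * (if k = j then 1 else 0)
      with hlam
    have hlpos : ∀ k, 0 ≤ lam k := by
      intro k
      have := hpos k
      simp only [hlam]
      have h1 : 0 ≤ (1 - t) * lamStar k := mul_nonneg (by linarith) this
      have h2 : 0 ≤ t * (if k = j then 1 else 0) := by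
        apply mul_nonneg ht0.le; split <;> norm_num
      linarith
    have hlsum : ∑ k, lam k = 1 := by
      simp only [hlam]
      rw [Finset.sum_add_distrib, ← Finset.mul_sum, ← Finset.mul_sum, hsum,
        Finset.sum_ite_eq' Finset.univ j (fun _ => (1:ℝ))]
      simp
    have hlvec : ∑ k, lam k • g k = G + t • (g j - G) := by
      simp only [hlam]
      have : ∀ k, ((1 - t) * lamStar k + t * (if k = j then 1 else 0)) • g k
          = (1 - t) • (lamStar k • g k) + (if k = j then t • g k else 0) := by
        intro k
        rw [add_smul, mul_smul]
        congr 1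
        split <;> simp [mul_smul]
      rw [Finset.sum_congr rfl (fun k _ => this k), Finset.sum_add_distrib,
        ← Finset.smul_sum, Finset.sum_ite_eq' Finset.univ j (fun k => t • g k)]
      simp only [Finset.mem_univ, if_true, ← hG]
      rw [smul_sub, sub_smul, one_smul]
      abel
    have hle := hmin lam hlpos hlsum
    rw [hlvec] at hle
    have hexp : ‖G + t • (g j - G)‖ ^ 2 = ‖G‖ ^ 2 + 2 * (t * c) + t ^ 2 * N := by
      rw [norm_add_sq_real, real_inner_smul_right, norm_smul]
      rw [hc, hN]
      rw [mul_pow]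
      rw [Real.norm_eq_abs, abs_of_pos ht0]
    have hmain : 0 ≤ 2 * (t * c) + t ^ 2 * N := by nlinarith [hle, hexp]
    nlinarith [mul_le_mul_of_nonneg_left htc ht0.le, mul_pos ht0 ht0]
  -- weighted sum equals ‖G‖²
  have hsum' : ∑ j, lamStar j * ⟪G, g j⟫ = ‖G‖ ^ 2 := by
    have : ⟪G, G⟫ = ∑ j, lamStar j * ⟪G, g j⟫ := by
      conv_lhs => rw [hG, inner_sum]
      exact Finset.sum_congr rfl fun j _ => real_inner_smul_right G (g j) (lamStar j)
    rw [← this, real_inner_self_eq_norm_sq]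
  have heq : ⟪G, g i⟫ = ‖G‖ ^ 2 := by
    by_contra hne
    have hgt : ‖G‖ ^ 2 < ⟪G, g i⟫ := lt_of_le_of_ne (key i) (Ne.symm hne)
    have hlt : ∑ j, lamStar j * ‖G‖ ^ 2 < ∑ j, lamStar j * ⟪G, g j⟫ := by
      apply Finset.sum_lt_sum
      · intro j _
        exact mul_le_mul_of_nonneg_left (key j) (hpos j)
      · exact ⟨i, Finset.mem_univ i, by nlinarith [hgt, hi]⟩
    rw [← Finset.sum_mul, hsum, one_mul, hsum'] at hlt
    exact lt_irrefl _ hlt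
  rw [hd]
  rw [inner_neg_right, norm_neg]
  rw [real_inner_comm, heq]
end

section
/- Let B be a symmetric positive definite n×n real matrix and g_1,…,g_m ∈ ℝ^n. Then min_{d∈ℝ^n} [ max_{i∈{1,…,m}} ⟨g_i, d⟩ + (1/2)⟨d, B d⟩ ] = − min_{λ∈Δ_m} (1/2)⟨Σ_{i=1}^m λ_i g_i, B^{-1}(Σ_{i=1}^m λ_i g_i)⟩, and for any λ* attaining the right-hand minimum, d* = −B^{-1}(Σ_{i=1}^m λ*_i g_i) is the unique minimizer of the left-hand problem. -/
open scoped RealInnerProductSpace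

/-- Duality for the variable-metric subproblem: for a symmetric positive
definite matrix `B` (with inverse `Binv`), with
`φ d = max_i ⟨g i, d⟩ + ⟨d, B d⟩/2` and `ψ λ = ⟨∑ λ_i g_i, B⁻¹ (∑ λ_i g_i)⟩/2`, for any
minimizer `λ*` of `ψ` over the unit simplex, the vector `d* = −B⁻¹ (∑ λ*_i g_i)` is the
unique minimizer of `φ` over `ℝ^n` and `min φ = − min ψ` (i.e. `φ d* = −ψ λ*`). -/
theorem stmt3 {n m : ℕ} [NeZero m]
    (B Binv : EuclideanSpace ℝ (Fin n) →ₗ[ℝ] EuclideanSpace ℝ (Fin n))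
    (hsym : ∀ x y : EuclideanSpace ℝ (Fin n), ⟪B x, y⟫ = ⟪x, B y⟫)
    (hposdef : ∀ x : EuclideanSpace ℝ (Fin n), x ≠ 0 → 0 < ⟪x, B x⟫)
    (hinv1 : ∀ x, B (Binv x) = x) (hinv2 : ∀ x, Binv (B x) = x)
    (g : Fin m → EuclideanSpace ℝ (Fin n))
    (φ : EuclideanSpace ℝ (Fin n) → ℝ)
    (hφ : ∀ d, φ d = (fmax fun i => ⟪g i, d⟫) + ⟪d, B d⟫ / 2)
    (ψ : (Fin m → ℝ) → ℝ)
    (hψ : ∀ lam, ψ lam = ⟪∑ i, lam i • g i, Binv (∑ i, lam i • g i)⟫ / 2)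
    (lamStar : Fin m → ℝ) (hpos : ∀ i, 0 ≤ lamStar i) (hsum : ∑ i, lamStar i = 1)
    (hlamMin : ∀ lam : Fin m → ℝ, (∀ i, 0 ≤ lam i) → ∑ i, lam i = 1 → ψ lamStar ≤ ψ lam)
    (dStar : EuclideanSpace ℝ (Fin n)) (hd : dStar = -Binv (∑ i, lamStar i • g i)) :
    φ dStar = -ψ lamStar ∧ (∀ d, φ dStar ≤ φ d) ∧
      ∀ d, d ≠ dStar → φ dStar < φ d := by
  set G : EuclideanSpace ℝ (Fin n) := ∑ i, lamStar i • g i with hG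
  have hBd : B dStar = -G := by rw [hd, map_neg, hinv1]
  -- symmetry of Binv
  have hsymInv : ∀ x y : EuclideanSpace ℝ (Fin n), ⟪Binv x, y⟫ = ⟪x, Binv y⟫ := by
    intro x y
    calc ⟪Binv x, y⟫ = ⟪Binv x, B (Binv y)⟫ := by rw [hinv1]
      _ = ⟪B (Binv x), Binv y⟫ := (hsym _ _).symm
      _ = ⟪x, Binv y⟫ := by rw [hinv1]
  -- positive definiteness of Binv
  have hposInv : ∀ x : EuclideanSpace ℝ (Fin n), x ≠ 0 → 0 < ⟪x, Binv x⟫ := by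
    intro x hx
    have hBx : Binv x ≠ 0 := fun h => hx (by rw [← hinv1 x, h, map_zero])
    calc (0:ℝ) < ⟪Binv x, B (Binv x)⟫ := hposdef _ hBx
      _ = ⟪B (Binv x), Binv x⟫ := real_inner_comm _ _
      _ = ⟪x, Binv x⟫ := by rw [hinv1]
  have hnnInv : ∀ x : EuclideanSpace ℝ (Fin n), 0 ≤ ⟪x, Binv x⟫ := by
    intro x
    by_cases hx : x = 0
    · simp [hx]
    · exact (hposInv x hx).le
  -- KKT condition from optimality of lamStar
  have hkkt : ∀ i, ⟪G, Binv G⟫ ≤ ⟪g i, Binv G⟫ := by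
    intro i
    set v : EuclideanSpace ℝ (Fin n) := g i - G with hv
    set s : ℝ := ⟪v, Binv G⟫ with hs
    set c : ℝ := ⟪v, Binv v⟫ with hc
    have hcnn : 0 ≤ c := hnnInv v
    have hcross : ⟪G, Binv v⟫ = s := by
      rw [hs, real_inner_comm, hsymInv]
    have key : ∀ t : ℝ, 0 < t → t ≤ 1 → 0 ≤ 2 * s + t * c := by
      intro t ht ht1
      set lam : Fin m → ℝ := fun j => (1 - t) * lamStar j + t * (if j = i then 1 else 0)
        with hlamdef
      have hlampos : ∀ j, 0 ≤ lam j := by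
        intro j
        have h1 : 0 ≤ (1 - t) * lamStar j := mul_nonneg (by linarith) (hpos j)
        have h2 : 0 ≤ t * (if j = i then (1:ℝ) else 0) := by positivity
        simpa [hlamdef] using add_nonneg h1 h2
      have hlamsum : ∑ j, lam j = 1 := by
        simp only [hlamdef, Finset.sum_add_distrib, ← Finset.mul_sum, hsum]
        rw [Finset.sum_ite_eq' Finset.univ i (fun _ => (1:ℝ))]
        simp
      have hGlam : ∑ j, lam j • g j = G + t • v := by
        have h1 : ∑ j, lam j • g j = (1 - t) • G + t • g i := by
          simp only [hlamdef, add_smul, Finset.sum_add_distrib, mul_smul]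
          congr 1
          · rw [← Finset.smul_sum]
          · rw [← Finset.smul_sum]
            congr 1
            rw [show (∑ j, (if j = i then (1:ℝ) else 0) • g j)
                = ∑ j, (if j = i then g j else 0) from by
              refine Finset.sum_congr rfl fun j _ => ?_
              by_cases hji : j = i <;> simp [hji]]
            simp
        rw [h1, hv]
        module
      have hmin := hlamMin lam hlampos hlamsum
      rw [hψ, hψ, hGlam, ← hG] at hmin
      have expand : ⟪G + t • v, Binv (G + t • v)⟫
          = ⟪G, Binv G⟫ + 2 * t * s + t * t * c := by
        rw [map_add, map_smul, inner_add_left, inner_add_right, inner_add_right,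
          real_inner_smul_left, real_inner_smul_left, real_inner_smul_right,
          real_inner_smul_right, hcross, ← hs, ← hc]
        ring
      rw [expand] at hmin
      have h0 : 0 ≤ t * (2 * s + t * c) := by nlinarith
      nlinarith
    have hs0 : 0 ≤ s := by
      by_cases hc0 : c = 0
      · have := key 1 one_pos le_rfl
        rw [hc0] at this
        linarith
      · have hcpos : 0 < c := lt_of_le_of_ne hcnn (Ne.symm hc0)
        by_contra hneg
        push_neg at hneg
        set t := min 1 ((-s) / c) with htdef
        have ht : 0 < t := lt_min one_pos (div_pos (by linarith) hcpos)
        have ht1 : t ≤ 1 := min_le_left _ _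
        have htc : t * c ≤ -s := by
          have h2 : t ≤ (-s) / c := min_le_right _ _
          calc t * c ≤ ((-s) / c) * c := mul_le_mul_of_nonneg_right h2 hcpos.le
            _ = -s := div_mul_cancel₀ _ (ne_of_gt hcpos)
        have := key t ht ht1
        linarith
    have hseq : s = ⟪g i, Binv G⟫ - ⟪G, Binv G⟫ := by
      rw [hs, hv, inner_sub_left]
    linarith
  -- value of each linear term at dStar
  have hgd : ∀ i, ⟪g i, dStar⟫ = -⟪g i, Binv G⟫ := by
    intro i; rw [hd, inner_neg_right]
  -- the max at dStar equals -⟪G, Binv G⟫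
  have havg : ∀ d : EuclideanSpace ℝ (Fin n), ⟪G, d⟫ ≤ fmax fun i => ⟪g i, d⟫ := by
    intro d
    have h1 : ⟪G, d⟫ = ∑ i, lamStar i * ⟪g i, d⟫ := by
      rw [hG, sum_inner]
      exact Finset.sum_congr rfl fun i _ => real_inner_smul_left _ _ _
    have h2 : ∀ i ∈ Finset.univ, lamStar i * ⟪g i, d⟫
        ≤ lamStar i * (fmax fun i => ⟪g i, d⟫) := fun i _ =>
      mul_le_mul_of_nonneg_left (Finset.le_sup' (fun i => ⟪g i, d⟫) (Finset.mem_univ i)) (hpos i)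
    calc ⟪G, d⟫ = ∑ i, lamStar i * ⟪g i, d⟫ := h1
      _ ≤ ∑ i, lamStar i * (fmax fun i => ⟪g i, d⟫) := Finset.sum_le_sum h2
      _ = (∑ i, lamStar i) * (fmax fun i => ⟪g i, d⟫) := by rw [Finset.sum_mul]
      _ = fmax fun i => ⟪g i, d⟫ := by rw [hsum, one_mul]
  have hGd : ⟪G, dStar⟫ = -⟪G, Binv G⟫ := by
    rw [hd, inner_neg_right]
  have hmaxeq : (fmax fun i => ⟪g i, dStar⟫) = -⟪G, Binv G⟫ := by
    refine le_antisymm ?_ ?_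
    · refine Finset.sup'_le _ _ fun i _ => ?_
      rw [hgd i]
      linarith [hkkt i]
    · rw [← hGd]; exact havg dStar
  have hdBd : ⟪dStar, B dStar⟫ = ⟪G, Binv G⟫ := by
    rw [hBd, hd, inner_neg_neg, hsymInv]
  have hψval : ψ lamStar = ⟪G, Binv G⟫ / 2 := by rw [hψ]
  have hφval : φ dStar = -⟪G, Binv G⟫ / 2 := by
    rw [hφ, hmaxeq, hdBd]; ring
  -- quadratic lower bound
  have hquad : ∀ d : EuclideanSpace ℝ (Fin n),
      φ dStar + ⟪d - dStar, B (d - dStar)⟫ / 2 ≤ φ d := by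
    intro d
    have hlb : ⟪G, d⟫ + ⟪d, B d⟫ / 2 ≤ φ d := by
      rw [hφ]
      linarith [havg d]
    have hexp : ⟪d - dStar, B (d - dStar)⟫
        = ⟪d, B d⟫ + 2 * ⟪G, d⟫ + ⟪G, Binv G⟫ := by
      rw [map_sub, inner_sub_left, inner_sub_right, inner_sub_right, hBd,
        inner_neg_right, inner_neg_right]
      have h1 : ⟪dStar, B d⟫ = -⟪G, d⟫ := by
        rw [← hsym, hBd, inner_neg_left]
      have h2 : ⟪d, G⟫ = ⟪G, d⟫ := real_inner_comm _ _
      have h3 : ⟪dStar, G⟫ = -⟪G, Binv G⟫ := by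
        rw [hd, inner_neg_left, hsymInv]
      rw [h1, h2, h3]
      ring
    rw [hφval, hexp]
    linarith
  refine ⟨by rw [hφval, hψval]; ring, ?_, ?_⟩
  · intro d
    have := hquad d
    have hnn : 0 ≤ ⟪d - dStar, B (d - dStar)⟫ := by
      by_cases hx : d - dStar = 0
      · simp [hx]
      · exact (hposdef _ hx).le
    linarith
  · intro d hne
    have := hquad d
    have hne' : d - dStar ≠ 0 := sub_ne_zero_of_ne hne
    have hp := hposdef _ hne'
    linarith
end

section
/- Let F : ℝ^n → ℝ^m be continuously differentiable, B a symmetric positive definite n×n real matrix, x ∈ ℝ^n, d ∈ ℝ^n with d ≠ 0, and A ⊆ {1,…,m} a nonempty set of indices such that ⟨∇F_i(x), d⟩ = −‖d‖_B² for all i ∈ A. Suppose each F_i with i ∈ A is μ_i-strongly convex relative to ‖·‖_B with μ_i > 0, and let σ ∈ (0,1). If t > 0 satisfies the Armijo condition at x in direction d, then t ≤ 2(1−σ)/max_{i∈A} μ_i. -/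
open scoped RealInnerProductSpace

/-- Upper bound on Armijo stepsizes.  If `d ≠ 0` satisfies
`⟨∇F_i(x), d⟩ = −‖d‖_B²` for all `i` in a nonempty active set `A`, each `F_i` (`i ∈ A`) is
`μ_i`-strongly convex relative to `‖·‖_B` with `μ_i > 0`, and `t > 0` satisfies the Armijo
condition at `x` in direction `d`, then `t ≤ 2(1−σ)/max_{i∈A} μ_i`. -/
theorem stmt4 {n m : ℕ} (F : Fin m → EuclideanSpace ℝ (Fin n) → ℝ)
    (hF : ∀ i, ContDiff ℝ 1 (F i))
    (B : EuclideanSpace ℝ (Fin n) →ₗ[ℝ] EuclideanSpace ℝ (Fin n))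
    (hsym : ∀ x y : EuclideanSpace ℝ (Fin n), ⟪B x, y⟫ = ⟪x, B y⟫)
    (hposdef : ∀ x : EuclideanSpace ℝ (Fin n), x ≠ 0 → 0 < ⟪x, B x⟫)
    (x d : EuclideanSpace ℝ (Fin n)) (hd : d ≠ 0)
    (A : Finset (Fin m)) (hA : A.Nonempty)
    (hAd : ∀ i ∈ A, ⟪gradient (F i) x, d⟫ = -⟪d, B d⟫)
    (μ : Fin m → ℝ) (hμ : ∀ i ∈ A, 0 < μ i)
    (hsc : ∀ i ∈ A, ∀ y z : EuclideanSpace ℝ (Fin n),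
      F i y + ⟪gradient (F i) y, z - y⟫ + μ i / 2 * ⟪z - y, B (z - y)⟫ ≤ F i z)
    (σ : ℝ) (hσ : σ ∈ Set.Ioo (0 : ℝ) 1) (t : ℝ) (ht : 0 < t)
    (harmijo : ∀ i, F i (x + t • d) - F i x ≤ σ * t * ⟪gradient (F i) x, d⟫) :
    t ≤ 2 * (1 - σ) / A.sup' hA μ := by
  obtain ⟨i, hiA, hieq⟩ := Finset.exists_mem_eq_sup' hA μ
  rw [hieq]
  have hμi := hμ i hiA
  have hq : 0 < ⟪d, B d⟫ := hposdef d hd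
  -- strong convexity at y = x, z = x + t • d
  have hsci := hsc i hiA x (x + t • d)
  have hkey : (x + t • d) - x = t • d := by abel
  rw [hkey] at hsci
  have hinner : ⟪gradient (F i) x, t • d⟫ = t * ⟪gradient (F i) x, d⟫ :=
    real_inner_smul_right _ _ _
  have hq2 : ⟪t • d, B (t • d)⟫ = t * t * ⟪d, B d⟫ := by
    rw [map_smul, real_inner_smul_left, real_inner_smul_right]; ring
  rw [hinner, hq2, hAd i hiA] at hsci
  have harm := harmijo i
  rw [hAd i hiA] at harm
  -- combine: F i x + t * (-q) + μ/2 * t² q ≤ F i (x + t d) ≤ F i x + σ t (-q)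
  have hcomb : t * -⟪d, B d⟫ + μ i / 2 * (t * t * ⟪d, B d⟫) ≤ σ * t * -⟪d, B d⟫ := by
    nlinarith [hsci, harm]
  have h1 : μ i / 2 * t ≤ 1 - σ := by
    have := mul_le_mul_of_nonneg_right hcomb (inv_pos.mpr hq).le
    nlinarith [mul_pos ht hq]
  rw [le_div_iff₀ hμi]
  nlinarith [h1]
end

section
/- Let F : ℝ^n → ℝ^m be differentiable, B a symmetric positive definite n×n real matrix, x ∈ ℝ^n, and d ∈ ℝ^n with d ≠ 0 and ⟨∇F_i(x), d⟩ ≤ −‖d‖_B² for all i ∈ {1,…,m}. Suppose each F_i is L_i-smooth relative to ‖·‖_B with L_i > 0, and let σ, γ ∈ (0,1) and t > 0. If the Armijo condition fails at stepsize t/γ, i.e., F_i(x + (t/γ) d) − F_i(x) > σ (t/γ) ⟨∇F_i(x), d⟩ for some index i, then t ≥ 2γ(1−σ)/max_{i∈{1,…,m}} L_i. -/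
open scoped RealInnerProductSpace

/-- Lower bound from backtracking.  If `d ≠ 0` satisfies
`⟨∇F_i(x), d⟩ ≤ −‖d‖_B²` for all `i`, each `F_i` is `L_i`-smooth relative to `‖·‖_B` with
`L_i > 0`, and the Armijo condition fails at stepsize `t/γ` for some index `i`, then
`t ≥ 2γ(1−σ)/max_i L_i`. -/
theorem stmt5 {n m : ℕ} [NeZero m] (F : Fin m → EuclideanSpace ℝ (Fin n) → ℝ)
    (hF : ∀ i, Differentiable ℝ (F i))
    (B : EuclideanSpace ℝ (Fin n) →ₗ[ℝ] EuclideanSpace ℝ (Fin n))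
    (hsym : ∀ x y : EuclideanSpace ℝ (Fin n), ⟪B x, y⟫ = ⟪x, B y⟫)
    (hposdef : ∀ x : EuclideanSpace ℝ (Fin n), x ≠ 0 → 0 < ⟪x, B x⟫)
    (x d : EuclideanSpace ℝ (Fin n)) (hd : d ≠ 0)
    (hdesc : ∀ i, ⟪gradient (F i) x, d⟫ ≤ -⟪d, B d⟫)
    (L : Fin m → ℝ) (hL : ∀ i, 0 < L i)
    (hsmooth : ∀ i, ∀ y z : EuclideanSpace ℝ (Fin n),
      F i z ≤ F i y + ⟪gradient (F i) y, z - y⟫ + L i / 2 * ⟪z - y, B (z - y)⟫)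
    (σ γ : ℝ) (hσ : σ ∈ Set.Ioo (0 : ℝ) 1) (hγ : γ ∈ Set.Ioo (0 : ℝ) 1)
    (t : ℝ) (ht : 0 < t)
    (hfail : ∃ i, σ * (t / γ) * ⟪gradient (F i) x, d⟫ <
      F i (x + (t / γ) • d) - F i x) :
    2 * γ * (1 - σ) / fmax L ≤ t := by
  obtain ⟨i, hi⟩ := hfail
  set s := t / γ with hs
  have hγ0 : 0 < γ := hγ.1
  have hs0 : 0 < s := div_pos ht hγ0
  have hb : 0 < ⟪d, B d⟫ := hposdef d hd
  set g := ⟪gradient (F i) x, d⟫ with hg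
  have hsm := hsmooth i x (x + s • d)
  have hsub : (x + s • d) - x = s • d := by abel
  rw [hsub] at hsm
  have h1 : ⟪gradient (F i) x, s • d⟫ = s * g := real_inner_smul_right _ _ _
  have h2 : ⟪s • d, B (s • d)⟫ = s * s * ⟪d, B d⟫ := by
    rw [map_smul, real_inner_smul_left, real_inner_smul_right]; ring
  rw [h1, h2] at hsm
  have key : σ * s * g < F i x + s * g + L i / 2 * (s * s * ⟪d, B d⟫) - F i x :=
    lt_of_lt_of_le hi (by linarith)
  have hdi := hdesc i
  have hLi : L i ≤ fmax L := Finset.le_sup' L (Finset.mem_univ i)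
  have hM : 0 < fmax L := lt_of_lt_of_le (hL i) hLi
  rw [div_le_iff₀ hM]
  have hts : t = γ * s := by rw [hs]; field_simp
  rw [hts]
  have h3 : (1 - σ) * s * ⟪d, B d⟫ < L i / 2 * (s * s * ⟪d, B d⟫) := by
    have hnn : 0 ≤ (1 - σ) * s := mul_nonneg (by linarith [hσ.2]) hs0.le
    nlinarith [mul_le_mul_of_nonneg_left hdi hnn]
  have h4 : 2 * (1 - σ) < L i * s := by
    nlinarith [mul_pos hs0 hb]
  nlinarith [mul_le_mul_of_nonneg_right hLi hs0.le]
end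

section
/- Let F : ℝ^n → ℝ^m be continuously differentiable, x ∈ ℝ^n, B a symmetric positive definite n×n real matrix, and α_1,…,α_m > 0. Let d* be the unique minimizer over ℝ^n of d ↦ max_{i∈{1,…,m}} ⟨∇F_i(x), d⟩/α_i + (1/2)‖d‖_B². Then the following statements are equivalent: (a) x is not Pareto critical for F; (b) d* ≠ 0; (c) ⟨∇F_i(x), d*⟩ < 0 for all i ∈ {1,…,m}. -/
open scoped RealInnerProductSpace

/-- A point `x` is Pareto critical for `F` if there is no direction `d` with
`⟨∇F_i(x), d⟩ < 0` for all `i`. -/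
def ParetoCritical {n m : ℕ} (F : Fin m → EuclideanSpace ℝ (Fin n) → ℝ)
    (x : EuclideanSpace ℝ (Fin n)) : Prop :=
  ¬∃ d : EuclideanSpace ℝ (Fin n), ∀ i, ⟪gradient (F i) x, d⟫ < 0

/-- For the unique minimizer `d*` of
`d ↦ max_i ⟨∇F_i(x), d⟩/α_i + ‖d‖_B²/2`, the following are equivalent:
(a) `x` is not Pareto critical; (b) `d* ≠ 0`; (c) `d*` is a descent direction. -/
theorem stmt7 {n m : ℕ} [NeZero m] (F : Fin m → EuclideanSpace ℝ (Fin n) → ℝ)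
    (hF : ∀ i, ContDiff ℝ 1 (F i))
    (B : EuclideanSpace ℝ (Fin n) →ₗ[ℝ] EuclideanSpace ℝ (Fin n))
    (hsym : ∀ x y : EuclideanSpace ℝ (Fin n), ⟪B x, y⟫ = ⟪x, B y⟫)
    (hposdef : ∀ x : EuclideanSpace ℝ (Fin n), x ≠ 0 → 0 < ⟪x, B x⟫)
    (x : EuclideanSpace ℝ (Fin n)) (α : Fin m → ℝ) (hα : ∀ i, 0 < α i)
    (dStar : EuclideanSpace ℝ (Fin n))
    (hmin : ∀ d : EuclideanSpace ℝ (Fin n),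
      (fmax fun i => ⟪gradient (F i) x, dStar⟫ / α i) + ⟪dStar, B dStar⟫ / 2 ≤
        (fmax fun i => ⟪gradient (F i) x, d⟫ / α i) + ⟪d, B d⟫ / 2) :
    (¬ParetoCritical F x ↔ dStar ≠ 0) ∧
      (dStar ≠ 0 ↔ ∀ i, ⟪gradient (F i) x, dStar⟫ < 0) := by
  set g : Fin m → EuclideanSpace ℝ (Fin n) := fun i => gradient (F i) x with hg
  -- value of the objective at 0 is 0
  have hφ0 : (fmax fun i => ⟪g i, (0:EuclideanSpace ℝ (Fin n))⟫ / α i)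
      + ⟪(0:EuclideanSpace ℝ (Fin n)), B 0⟫ / 2 = 0 := by
    simp [fmax, inner_zero_right, map_zero]
  have hminS : (fmax fun i => ⟪g i, dStar⟫ / α i) + ⟪dStar, B dStar⟫ / 2 ≤ 0 := by
    have := hmin 0
    rw [hφ0] at this
    exact this
  -- (b) → (c)
  have hbc : dStar ≠ 0 → ∀ i, ⟪g i, dStar⟫ < 0 := by
    intro hd i
    have hpos : 0 < ⟪dStar, B dStar⟫ := hposdef dStar hd
    have hle : (fmax fun i => ⟪g i, dStar⟫ / α i) ≤ -(⟪dStar, B dStar⟫ / 2) := by linarith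
    have hi : ⟪g i, dStar⟫ / α i ≤ fmax fun i => ⟪g i, dStar⟫ / α i :=
      Finset.le_sup' (fun i => ⟪g i, dStar⟫ / α i) (Finset.mem_univ i)
    have hneg : ⟪g i, dStar⟫ / α i < 0 := by linarith
    have := (div_lt_iff₀ (hα i)).mp hneg
    linarith
  -- (c) → (b)
  have hcb : (∀ i, ⟪g i, dStar⟫ < 0) → dStar ≠ 0 := by
    intro h hd
    have := h 0
    rw [hd] at this
    simp [inner_zero_right] at this
  -- (a) → (b)
  have hab : ¬ParetoCritical F x → dStar ≠ 0 := by
    intro ha hd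
    rw [ParetoCritical, not_not] at ha
    obtain ⟨d, hdlt⟩ := ha
    have hdne : d ≠ 0 := by
      intro h0
      have := hdlt 0
      rw [h0] at this
      simp [inner_zero_right] at this
    set M : ℝ := fmax fun i => ⟪g i, d⟫ / α i with hM
    have hMlt : M < 0 := by
      rw [hM, fmax]
      rw [Finset.sup'_lt_iff]
      intro i _
      exact div_neg_of_neg_of_pos (hdlt i) (hα i)
    set c : ℝ := ⟪d, B d⟫ with hc
    have hcpos : 0 < c := hposdef d hdne
    set t : ℝ := -M / c with ht
    have htpos : 0 < t := div_pos (by linarith) hcpos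
    have h1 : (fmax fun i => ⟪g i, t • d⟫ / α i) ≤ t * M := by
      rw [fmax]
      apply Finset.sup'_le
      intro i _
      have hile : ⟪g i, d⟫ / α i ≤ M :=
        Finset.le_sup' (fun i => ⟪g i, d⟫ / α i) (Finset.mem_univ i)
      have : ⟪g i, t • d⟫ = t * ⟪g i, d⟫ := real_inner_smul_right _ _ _
      rw [this, mul_div_assoc]
      exact mul_le_mul_of_nonneg_left hile (le_of_lt htpos)
    have h2 : ⟪t • d, B (t • d)⟫ = t * t * c := by
      rw [map_smul, real_inner_smul_left, real_inner_smul_right, hc]; ring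
    have h3 := hmin (t • d)
    rw [hd, hφ0] at h3
    have htc : t * c = -M := by
      rw [ht]; field_simp
    have h4 : t * M + t * t * c / 2 < 0 := by
      have : t * t * c = t * (t * c) := by ring
      rw [this, htc]
      nlinarith
    linarith
  refine ⟨⟨hab, fun hb => ?_⟩, ⟨hbc, hcb⟩⟩
  rw [ParetoCritical, not_not]
  exact ⟨dStar, hbc hb⟩
end

section
/- Let g_1,…,g_m ∈ ℝ^n, let α_max > 0 and α_1,…,α_m ∈ (0, α_max], and let B be a symmetric positive definite n×n real matrix with B ⪯ bI for some b > 0 (i.e., ⟨d, B d⟩ ≤ b‖d‖² for all d). Then min_{d∈ℝ^n} max_{i∈{1,…,m}} [ ⟨g_i, d⟩/α_i + (1/2)‖d‖_B² ] ≤ (1/(b·α_max²)) · min_{d∈ℝ^n} max_{i∈{1,…,m}} [ ⟨g_i, d⟩ + (1/2)‖d‖² ]. -/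
open scoped RealInnerProductSpace

lemma fmax_le {m : ℕ} [NeZero m] {f : Fin m → ℝ} {a : ℝ} (h : ∀ i, f i ≤ a) : fmax f ≤ a :=
  Finset.sup'_le _ _ fun i _ => h i

lemma le_fmax {m : ℕ} [NeZero m] (f : Fin m → ℝ) (i : Fin m) : f i ≤ fmax f :=
  Finset.le_sup' f (Finset.mem_univ i)

lemma fmax_mono {m : ℕ} [NeZero m] {f h : Fin m → ℝ} (hle : ∀ i, f i ≤ h i) :
    fmax f ≤ fmax h :=
  fmax_le fun i => le_trans (hle i) (le_fmax h i)

lemma fmax_const_mul {m : ℕ} [NeZero m] (f : Fin m → ℝ) {c : ℝ} (hc : 0 ≤ c) :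
    fmax (fun i => c * f i) = c * fmax f := by
  unfold fmax
  rw [Finset.comp_sup'_eq_sup'_comp _ (fun x => c * x) (fun x y => mul_max_of_nonneg x y hc)]
  rfl

/-- coercivity of a positive definite map on a finite dimensional space -/
lemma coercive {n : ℕ} (B : EuclideanSpace ℝ (Fin n) →ₗ[ℝ] EuclideanSpace ℝ (Fin n))
    (hposdef : ∀ x : EuclideanSpace ℝ (Fin n), x ≠ 0 → 0 < ⟪x, B x⟫) :
    ∃ μ : ℝ, 0 < μ ∧ ∀ d : EuclideanSpace ℝ (Fin n), μ * ‖d‖ ^ 2 ≤ ⟪d, B d⟫ := by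
  by_cases hall : ∀ d : EuclideanSpace ℝ (Fin n), d = 0
  · exact ⟨1, one_pos, fun d => by simp [hall d]⟩
  push_neg at hall
  obtain ⟨d₀, hd₀⟩ := hall
  have hS : (Metric.sphere (0 : EuclideanSpace ℝ (Fin n)) 1).Nonempty := by
    refine ⟨‖d₀‖⁻¹ • d₀, ?_⟩
    simp [norm_smul, abs_of_nonneg (inv_nonneg.mpr (norm_nonneg d₀)),
      inv_mul_cancel₀ (norm_ne_zero_iff.mpr hd₀)]
  have hcont : Continuous fun x : EuclideanSpace ℝ (Fin n) => ⟪x, B x⟫ :=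
    Continuous.inner continuous_id (B.continuous_of_finiteDimensional.comp continuous_id)
  obtain ⟨x₀, hx₀S, hx₀min⟩ :=
    (isCompact_sphere (0 : EuclideanSpace ℝ (Fin n)) 1).exists_isMinOn hS hcont.continuousOn
  have hx₀norm : ‖x₀‖ = 1 := by simpa using hx₀S
  have hx₀ne : x₀ ≠ 0 := by intro h; rw [h] at hx₀norm; simp at hx₀norm
  refine ⟨⟪x₀, B x₀⟫, hposdef x₀ hx₀ne, fun d => ?_⟩
  rcases eq_or_ne d 0 with rfl | hd
  · simp
  · have hdn : (0:ℝ) < ‖d‖ := norm_pos_iff.mpr hd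
    have hmem : ‖d‖⁻¹ • d ∈ Metric.sphere (0 : EuclideanSpace ℝ (Fin n)) 1 := by
      simp [norm_smul, abs_of_nonneg (inv_nonneg.mpr (norm_nonneg d)),
        inv_mul_cancel₀ (ne_of_gt hdn)]
    have hle := isMinOn_iff.mp hx₀min _ hmem
    have heq : ⟪‖d‖⁻¹ • d, B (‖d‖⁻¹ • d)⟫ = ‖d‖⁻¹ * (‖d‖⁻¹ * ⟪d, B d⟫) := by
      rw [map_smul, real_inner_smul_left, real_inner_smul_right]
    rw [heq] at hle
    have h2 : ⟪x₀, B x₀⟫ * ‖d‖ ^ 2 ≤ ‖d‖⁻¹ * (‖d‖⁻¹ * ⟪d, B d⟫) * ‖d‖ ^ 2 :=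
      mul_le_mul_of_nonneg_right hle (by positivity)
    have hscal : ∀ r X : ℝ, r ≠ 0 → r⁻¹ * (r⁻¹ * X) * r ^ 2 = X := by
      intro r X hr
      have hrr : r⁻¹ * r = 1 := inv_mul_cancel₀ hr
      calc r⁻¹ * (r⁻¹ * X) * r ^ 2 = (r⁻¹ * r) * ((r⁻¹ * r) * X) := by ring
        _ = X := by rw [hrr]; ring
    calc ⟪x₀, B x₀⟫ * ‖d‖ ^ 2 ≤ ‖d‖⁻¹ * (‖d‖⁻¹ * ⟪d, B d⟫) * ‖d‖ ^ 2 := h2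
      _ = ⟪d, B d⟫ := hscal _ _ (ne_of_gt hdn)

lemma bdd_of_quad {E : Type*} [NormedAddCommGroup E] (f : E → ℝ) (C μ : ℝ) (hμ : 0 < μ)
    (h : ∀ d, -(C * ‖d‖) + μ / 2 * ‖d‖ ^ 2 ≤ f d) : BddBelow (Set.range f) := by
  refine ⟨-(C ^ 2 / (2 * μ)), fun y hy => ?_⟩
  obtain ⟨d, rfl⟩ := hy
  refine le_trans ?_ (h d)
  have h2μ : (0:ℝ) < 2 * μ := by linarith
  have key : (μ * ‖d‖ - C) ^ 2 / (2 * μ) = μ / 2 * ‖d‖ ^ 2 - C * ‖d‖ + C ^ 2 / (2 * μ) := by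
    field_simp; ring
  have hnn : 0 ≤ (μ * ‖d‖ - C) ^ 2 / (2 * μ) := div_nonneg (sq_nonneg _) (le_of_lt h2μ)
  linarith [key ▸ hnn]

/-- With `0 < α_i ≤ α_max` and `B` symmetric positive definite with
`B ⪯ bI`, the optimal value of the scaled variable-metric subproblem is at most
`1/(b α_max²)` times that of the steepest-descent subproblem. -/
theorem stmt8 {n m : ℕ} [NeZero m] (g : Fin m → EuclideanSpace ℝ (Fin n))
    (αmax : ℝ) (hαmax : 0 < αmax) (α : Fin m → ℝ) (hα : ∀ i, α i ∈ Set.Ioc 0 αmax)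
    (B : EuclideanSpace ℝ (Fin n) →ₗ[ℝ] EuclideanSpace ℝ (Fin n))
    (hsym : ∀ x y : EuclideanSpace ℝ (Fin n), ⟪B x, y⟫ = ⟪x, B y⟫)
    (hposdef : ∀ x : EuclideanSpace ℝ (Fin n), x ≠ 0 → 0 < ⟪x, B x⟫)
    (b : ℝ) (hb : 0 < b)
    (hBb : ∀ d : EuclideanSpace ℝ (Fin n), ⟪d, B d⟫ ≤ b * ‖d‖ ^ 2) :
    (⨅ d : EuclideanSpace ℝ (Fin n),
        ((fmax fun i => ⟪g i, d⟫ / α i) + ⟪d, B d⟫ / 2)) ≤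
      (1 / (b * αmax ^ 2)) *
        ⨅ d : EuclideanSpace ℝ (Fin n), ((fmax fun i => ⟪g i, d⟫) + ‖d‖ ^ 2 / 2) := by
  set f : EuclideanSpace ℝ (Fin n) → ℝ := fun d => (fmax fun i => ⟪g i, d⟫ / α i) + ⟪d, B d⟫ / 2 with hf
  set q : EuclideanSpace ℝ (Fin n) → ℝ := fun d => (fmax fun i => ⟪g i, d⟫) + ‖d‖ ^ 2 / 2 with hq
  obtain ⟨μ, hμ, hcoer⟩ := coercive B hposdef
  have hα0 : ∀ i, 0 < α i := fun i => (hα i).1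
  have hfbdd : BddBelow (Set.range f) := by
    refine bdd_of_quad f (‖g 0‖ / α 0) μ hμ fun d => ?_
    have hip : -(‖g 0‖ * ‖d‖) ≤ ⟪g 0, d⟫ := by
      nlinarith [abs_real_inner_le_norm (g 0) d, neg_abs_le (⟪g 0, d⟫)]
    have h1 : -(‖g 0‖ * ‖d‖) / α 0 ≤ ⟪g 0, d⟫ / α 0 := by
      have := hα0 0; gcongr
    have he : -(‖g 0‖ * ‖d‖) / α 0 = -(‖g 0‖ / α 0 * ‖d‖) := by ring
    have h2 : ⟪g 0, d⟫ / α 0 ≤ fmax fun i => ⟪g i, d⟫ / α i :=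
      le_fmax (fun i => ⟪g i, d⟫ / α i) 0
    have h3 := hcoer d
    simp only [hf]
    nlinarith [h1, he, h2, h3]
  have hf0 : f 0 = 0 := by
    simp only [hf]
    have e : (fun i => ⟪g i, (0 : EuclideanSpace ℝ (Fin n))⟫ / α i) = fun _ : Fin m => (0:ℝ) := by
      funext i; simp
    rw [e]
    unfold fmax
    simp
  have hc' : (0:ℝ) < 1 / (b * αmax ^ 2) := by positivity
  set c' : ℝ := 1 / (b * αmax ^ 2) with hc'def
  set c : ℝ := 1 / (b * αmax) with hcdef
  have hc : 0 < c := by positivity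
  rw [Real.mul_iInf_of_nonneg (le_of_lt hc')]
  refine le_ciInf fun d => ?_
  by_cases hcase : fmax (fun i => ⟪g i, d⟫) ≤ 0
  · have hgi : ∀ i, ⟪g i, d⟫ ≤ 0 := fun i => le_trans (le_fmax (fun j => ⟪g j, d⟫) i) hcase
    refine le_trans (ciInf_le hfbdd (c • d)) ?_
    simp only [hf, hq]
    have e1 : (fun i => ⟪g i, c • d⟫ / α i) = fun i => c * (⟪g i, d⟫ / α i) := by
      funext i; rw [real_inner_smul_right]; ring
    have e2 : ⟪c • d, B (c • d)⟫ = c ^ 2 * ⟪d, B d⟫ := by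
      rw [map_smul, real_inner_smul_left, real_inner_smul_right]; ring
    rw [e1, e2, fmax_const_mul _ (le_of_lt hc)]
    have hM : fmax (fun i => ⟪g i, d⟫ / α i) ≤ (1 / αmax) * fmax (fun i => ⟪g i, d⟫) := by
      rw [← fmax_const_mul _ (by positivity : (0:ℝ) ≤ 1 / αmax)]
      refine fmax_mono fun i => ?_
      have hx := hgi i
      have h6 : α i ≤ αmax := (hα i).2
      rw [div_le_iff₀ (hα0 i)]
      have key : ⟪g i, d⟫ * αmax ≤ ⟪g i, d⟫ * α i := mul_le_mul_of_nonpos_left h6 hx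
      calc ⟪g i, d⟫ = 1 / αmax * (⟪g i, d⟫ * αmax) := by field_simp
        _ ≤ 1 / αmax * (⟪g i, d⟫ * α i) :=
            mul_le_mul_of_nonneg_left key (by positivity)
        _ = 1 / αmax * ⟪g i, d⟫ * α i := by ring
    calc c * fmax (fun i => ⟪g i, d⟫ / α i) + c ^ 2 * ⟪d, B d⟫ / 2
        ≤ c * ((1 / αmax) * fmax (fun i => ⟪g i, d⟫)) + c ^ 2 * (b * ‖d‖ ^ 2) / 2 := by
          have t1 := mul_le_mul_of_nonneg_left hM (le_of_lt hc)
          have t2 := mul_le_mul_of_nonneg_left (hBb d) (sq_nonneg c)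
          linarith
      _ = c' * ((fmax fun i => ⟪g i, d⟫) + ‖d‖ ^ 2 / 2) := by
          rw [hc'def, hcdef]
          field_simp
  · push_neg at hcase
    have hqd : 0 < q d := by
      simp only [hq]
      nlinarith [sq_nonneg ‖d‖]
    calc iInf f ≤ f 0 := ciInf_le hfbdd 0
      _ = 0 := hf0
      _ ≤ c' * q d := le_of_lt (mul_pos hc' hqd)
end

section
/- Let F : ℝ^n → ℝ^m be continuously differentiable and let 0 < a ≤ b and 0 < α_min ≤ α_max. Let {x^k} ⊆ ℝ^n, and for each k let B_k be a symmetric n×n matrix with aI ⪯ B_k ⪯ bI, let α^k_i ∈ [α_min, α_max] for i ∈ {1,…,m}, and let d^k be the unique minimizer over ℝ^n of d ↦ max_{i∈{1,…,m}} ⟨∇F_i(x^k), d⟩/α^k_i + (1/2)‖d‖_{B_k}². If the sequence {x^k} converges to x* ∈ ℝ^n and d^k → 0, then x* is Pareto critical for F. -/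
open scoped RealInnerProductSpace

/-- If uniform bounds `aI ⪯ B_k ⪯ bI` and `α_min ≤ α^k_i ≤ α_max` hold,
`d^k` is the minimizer of the variable-metric Barzilai–Borwein subproblem at `x^k`,
`x^k → x*` and `d^k → 0`, then `x*` is Pareto critical. -/
theorem stmt9 {n m : ℕ} [NeZero m] (F : Fin m → EuclideanSpace ℝ (Fin n) → ℝ)
    (hF : ∀ i, ContDiff ℝ 1 (F i))
    (a b : ℝ) (ha : 0 < a) (hab : a ≤ b)
    (αmin αmax : ℝ) (hαmin : 0 < αmin) (hαmm : αmin ≤ αmax)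
    (x : ℕ → EuclideanSpace ℝ (Fin n))
    (B : ℕ → EuclideanSpace ℝ (Fin n) →ₗ[ℝ] EuclideanSpace ℝ (Fin n))
    (hsym : ∀ k, ∀ u v : EuclideanSpace ℝ (Fin n), ⟪B k u, v⟫ = ⟪u, B k v⟫)
    (hBa : ∀ k, ∀ u : EuclideanSpace ℝ (Fin n), a * ‖u‖ ^ 2 ≤ ⟪u, B k u⟫)
    (hBb : ∀ k, ∀ u : EuclideanSpace ℝ (Fin n), ⟪u, B k u⟫ ≤ b * ‖u‖ ^ 2)
    (α : ℕ → Fin m → ℝ) (hα : ∀ k i, α k i ∈ Set.Icc αmin αmax)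
    (d : ℕ → EuclideanSpace ℝ (Fin n))
    (hdmin : ∀ k, ∀ e : EuclideanSpace ℝ (Fin n),
      (fmax fun i => ⟪gradient (F i) (x k), d k⟫ / α k i) + ⟪d k, B k (d k)⟫ / 2 ≤
        (fmax fun i => ⟪gradient (F i) (x k), e⟫ / α k i) + ⟪e, B k e⟫ / 2)
    (xStar : EuclideanSpace ℝ (Fin n))
    (hx : Filter.Tendsto x Filter.atTop (nhds xStar))
    (hd : Filter.Tendsto d Filter.atTop (nhds 0)) :
    ParetoCritical F xStar := by

  intro ⟨e, he⟩
  have hb : 0 < b := lt_of_lt_of_le ha hab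
  have hαmax : 0 < αmax := lt_of_lt_of_le hαmin hαmm
  set g : Fin m → EuclideanSpace ℝ (Fin n) → EuclideanSpace ℝ (Fin n) :=
    fun i => gradient (F i) with hg
  have hgc : ∀ i, Continuous (g i) := by
    intro i
    unfold g
    unfold gradient
    exact (InnerProductSpace.toDual ℝ _).symm.continuous.comp
      ((hF i).continuous_fderiv one_ne_zero)
  -- e ≠ 0
  have hene : e ≠ 0 := by
    intro h
    have := he ⟨0, Nat.pos_of_ne_zero (NeZero.ne m)⟩
    rw [h, inner_zero_right] at this
    exact lt_irrefl 0 this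
  have hne : 0 < ‖e‖ := norm_pos_iff.mpr hene
  -- C := max over i of ⟪g i x*, e⟫ is negative
  set C : ℝ := fmax (fun i => ⟪g i xStar, e⟫) with hC
  have hCneg : C < 0 := by
    rw [hC]
    unfold fmax
    exact (Finset.sup'_lt_iff _).mpr (fun i _ => he i)
  set ε : ℝ := -C / (2 * αmax) with hε
  have hεpos : 0 < ε := div_pos (by linarith) (by linarith)
  set t : ℝ := ε / (b * ‖e‖ ^ 2) with ht
  have htpos : 0 < t := div_pos hεpos (by positivity)
  set δ : ℝ := t * ε / 2 with hδ
  have hδpos : 0 < δ := by positivity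
  -- the objective value at d k
  set L : ℕ → ℝ := fun k =>
    (fmax fun i => ⟪g i (x k), d k⟫ / α k i) + ⟪d k, B k (d k)⟫ / 2 with hL
  -- eventually L k ≤ -δ
  have hev1 : ∀ᶠ k in Filter.atTop, L k ≤ -δ := by
    have h1 : ∀ᶠ k in Filter.atTop, ∀ i, ⟪g i (x k), e⟫ < C / 2 := by
      rw [Filter.eventually_all]
      intro i
      have htend : Filter.Tendsto (fun k => ⟪g i (x k), e⟫) Filter.atTop
          (nhds ⟪g i xStar, e⟫) :=
        (((hgc i).tendsto _).comp hx).inner tendsto_const_nhds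
      have hlt : ⟪g i xStar, e⟫ < C / 2 := by
        have hle : ⟪g i xStar, e⟫ ≤ C := by
          rw [hC]; unfold fmax; exact Finset.le_sup' (fun i => ⟪g i xStar, e⟫) (Finset.mem_univ i)
        linarith
      exact htend.eventually (gt_mem_nhds hlt)
    filter_upwards [h1] with k hk
    have step : (fmax fun i => ⟪g i (x k), t • e⟫ / α k i) ≤ t * (-ε) := by
      unfold fmax
      apply Finset.sup'_le
      intro i _
      have hαi := hα k i
      have hα1 : (0:ℝ) < α k i := lt_of_lt_of_le hαmin hαi.1
      rw [real_inner_smul_right]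
      rw [div_le_iff₀ hα1] at *
      have h2 : ⟪g i (x k), e⟫ ≤ C / 2 := le_of_lt (hk i)
      have h3 : t * -ε * α k i ≥ t * -ε * αmax := by
        have : -ε ≤ 0 := by linarith
        nlinarith [hαi.2]
      have h4 : t * ⟪g i (x k), e⟫ ≤ t * (C / 2) :=
        mul_le_mul_of_nonneg_left h2 (le_of_lt htpos)
      have h5 : t * (C / 2) = t * -ε * αmax := by
        rw [hε]; field_simp
      linarith
    have hBte : ⟪t • e, B k (t • e)⟫ ≤ t ^ 2 * (b * ‖e‖ ^ 2) := by
      rw [map_smul, real_inner_smul_right, real_inner_smul_left]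
      have := hBb k e
      nlinarith
    have hmain := hdmin k (t • e)
    have : L k ≤ t * (-ε) + t ^ 2 * (b * ‖e‖ ^ 2) / 2 := by
      rw [hL]
      refine le_trans hmain (by linarith)
    have hteq : t ^ 2 * (b * ‖e‖ ^ 2) = t * ε := by
      rw [ht]; field_simp
    rw [hδ]; linarith
  -- lower bound on L
  set i0 : Fin m := ⟨0, Nat.pos_of_ne_zero (NeZero.ne m)⟩ with hi0
  set R : ℕ → ℝ := fun k => -(‖g i0 (x k)‖ * ‖d k‖) / αmin with hR
  have hlow : ∀ k, R k ≤ L k := by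
    intro k
    have hαi := hα k i0
    have hα1 : (0:ℝ) < α k i0 := lt_of_lt_of_le hαmin hαi.1
    have hN : (0:ℝ) ≤ ‖g i0 (x k)‖ * ‖d k‖ := by positivity
    have hCS : -(‖g i0 (x k)‖ * ‖d k‖) ≤ ⟪g i0 (x k), d k⟫ :=
      neg_le_of_neg_le (le_trans (neg_le_abs _) (abs_real_inner_le_norm _ _))
    have h1 : R k ≤ ⟪g i0 (x k), d k⟫ / α k i0 := by
      rw [hR]
      dsimp only
      rw [div_le_div_iff₀ hαmin hα1]
      nlinarith [hαi.1]
    have h2 : ⟪g i0 (x k), d k⟫ / α k i0 ≤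
        fmax fun i => ⟪g i (x k), d k⟫ / α k i := by
      unfold fmax
      exact Finset.le_sup' (fun i => ⟪g i (x k), d k⟫ / α k i) (Finset.mem_univ i0)
    have h3 : (0:ℝ) ≤ ⟪d k, B k (d k)⟫ := le_trans (by positivity) (hBa k (d k))
    rw [hL]
    dsimp only
    linarith
  -- R tends to 0
  have hRt : Filter.Tendsto R Filter.atTop (nhds 0) := by
    have h0 : Filter.Tendsto (fun k => -(‖g i0 (x k)‖ * ‖d k‖) / αmin)
        Filter.atTop (nhds (-(‖g i0 xStar‖ * ‖(0 : EuclideanSpace ℝ (Fin n))‖) / αmin)) := by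
      exact Filter.Tendsto.div_const
        (Filter.Tendsto.neg
          ((((hgc i0).tendsto _).comp hx).norm.mul hd.norm)) αmin
    simpa using h0
  have hev2 : ∀ᶠ k in Filter.atTop, -δ < R k :=
    hRt.eventually (lt_mem_nhds (by linarith : -δ < (0:ℝ)))
  obtain ⟨k, hk1, hk2⟩ := (hev1.and hev2).exists
  have := hlow k
  linarith
end

section
/- Let B be a symmetric positive definite n×n real matrix, g_1,…,g_m ∈ ℝ^n, α_1,…,α_m > 0, and let d* be the unique minimizer over ℝ^n of φ(d) = max_{i∈{1,…,m}} ⟨g_i, d⟩/α_i + (1/2)‖d‖_B². Then φ(d*) = −(1/2)‖d*‖_B², and consequently ⟨g_i, d*⟩ ≤ −α_i‖d*‖_B² for every i ∈ {1,…,m}. -/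
open scoped RealInnerProductSpace

lemma fmax_le_iff {m : ℕ} [NeZero m] (f : Fin m → ℝ) (a : ℝ) :
    fmax f ≤ a ↔ ∀ i, f i ≤ a := by
  simp [fmax, Finset.sup'_le_iff]

lemma fmax_smul {m : ℕ} [NeZero m] (f : Fin m → ℝ) {t : ℝ} (ht : 0 ≤ t) :
    fmax (fun i => t * f i) = t * fmax f := by
  obtain ⟨i, _, hi⟩ := Finset.exists_mem_eq_sup' (Finset.univ_nonempty (α := Fin m)) f
  apply le_antisymm
  · exact (fmax_le_iff _ _).mpr fun j =>
      mul_le_mul_of_nonneg_left (le_fmax f j) ht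
  · have : t * fmax f = t * f i := by rw [fmax, hi]
    rw [this]
    exact le_fmax (fun j => t * f j) i

/-- If `d*` is the unique minimizer of
`φ(d) = max_i ⟨g i, d⟩/α_i + ‖d‖_B²/2`, then `φ(d*) = −‖d*‖_B²/2`, and consequently
`⟨g i, d*⟩ ≤ −α_i ‖d*‖_B²` for every `i`. -/
theorem stmt10 {n m : ℕ} [NeZero m]
    (B : EuclideanSpace ℝ (Fin n) →ₗ[ℝ] EuclideanSpace ℝ (Fin n))
    (hsym : ∀ x y : EuclideanSpace ℝ (Fin n), ⟪B x, y⟫ = ⟪x, B y⟫)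
    (hposdef : ∀ x : EuclideanSpace ℝ (Fin n), x ≠ 0 → 0 < ⟪x, B x⟫)
    (g : Fin m → EuclideanSpace ℝ (Fin n)) (α : Fin m → ℝ) (hα : ∀ i, 0 < α i)
    (dStar : EuclideanSpace ℝ (Fin n))
    (hmin : ∀ d : EuclideanSpace ℝ (Fin n),
      (fmax fun i => ⟪g i, dStar⟫ / α i) + ⟪dStar, B dStar⟫ / 2 ≤
        (fmax fun i => ⟪g i, d⟫ / α i) + ⟪d, B d⟫ / 2) :
    (fmax fun i => ⟪g i, dStar⟫ / α i) + ⟪dStar, B dStar⟫ / 2 =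
        -(⟪dStar, B dStar⟫ / 2) ∧
      ∀ i, ⟪g i, dStar⟫ ≤ -(α i * ⟪dStar, B dStar⟫) := by
  set M := fmax fun i => ⟪g i, dStar⟫ / α i with hM
  set Q := ⟪dStar, B dStar⟫ with hQdef
  by_cases hd : dStar = 0
  · have hQ0 : Q = 0 := by simp [hQdef, hd]
    have hM0 : M = 0 := by
      have : (fun i => ⟪g i, dStar⟫ / α i) = fun _ => 0 := by
        funext i; simp [hd]
      rw [hM, this, fmax, Finset.sup'_const]
    constructor
    · rw [hM0, hQ0]; ring
    · intro i; simp [hd, hQ0]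
  · have hQpos : 0 < Q := hposdef dStar hd
    have hkey : ∀ t : ℝ, 0 ≤ t → M + Q / 2 ≤ t * M + t ^ 2 * Q / 2 := by
      intro t ht
      have h := hmin (t • dStar)
      have h1 : (fun i => ⟪g i, t • dStar⟫ / α i) = fun i => t * (⟪g i, dStar⟫ / α i) := by
        funext i
        rw [real_inner_smul_right, mul_div_assoc]
      have h2 : ⟪t • dStar, B (t • dStar)⟫ = t ^ 2 * Q := by
        rw [map_smul, real_inner_smul_left, real_inner_smul_right]
        ring
      rw [h1, h2, fmax_smul _ ht] at h
      linarith [h]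
    have hle : M + Q ≤ 0 := by
      by_contra h
      push_neg at h
      have hεpos : (0:ℝ) < min (1/2) ((M + Q) / Q) := lt_min (by norm_num) (div_pos h hQpos)
      set ε := min (1/2) ((M + Q) / Q) with hεdef
      have hε1 : ε ≤ 1/2 := min_le_left _ _
      have hε2 : ε * Q ≤ M + Q := by
        rw [← le_div_iff₀ hQpos]; exact min_le_right _ _
      have hk := hkey (1 - ε) (by linarith)
      have hmul : ε * (ε * Q) ≤ ε * (M + Q) := mul_le_mul_of_nonneg_left hε2 hεpos.le
      nlinarith [mul_pos (mul_pos hεpos hεpos) hQpos]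
    have hge : 0 ≤ M + Q := by
      by_contra h
      push_neg at h
      have hεpos : (0:ℝ) < -(M + Q) / Q := div_pos (by linarith) hQpos
      set ε := -(M + Q) / Q with hεdef
      have hεQ : ε * Q = -(M + Q) := by
        rw [hεdef, div_mul_cancel₀ _ hQpos.ne']
      have hk := hkey (1 + ε) (by linarith)
      nlinarith [mul_pos (mul_pos hεpos hεpos) hQpos]
    have hMQ : M = -Q := by linarith
    refine ⟨by rw [hMQ]; ring, fun i => ?_⟩
    have hi : ⟪g i, dStar⟫ / α i ≤ M := hM ▸ le_fmax (fun j => ⟪g j, dStar⟫ / α j) i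
    rw [hMQ] at hi
    have := (div_le_iff₀ (hα i)).mp hi
    linarith
end

section
/- Let F : ℝ^n → ℝ^m be continuously differentiable, B a symmetric positive definite n×n real matrix, x ∈ ℝ^n, and suppose each F_i is L_i-smooth and μ_i-strongly convex relative to ‖·‖_B with 0 < μ_i ≤ L_i. Let α_1,…,α_m satisfy μ_i ≤ α_i ≤ L_i, let d ≠ 0 be the unique minimizer over ℝ^n of d ↦ max_{i∈{1,…,m}} ⟨∇F_i(x), d⟩/α_i + (1/2)‖d‖_B², and let σ ∈ (0, 1/2], γ ∈ (0,1). Suppose t ∈ (0,1] satisfies the Armijo condition at x in direction d, and either t = 1 or there exists an index i with F_i(x + (t/γ) d) − F_i(x) > σ (t/γ) ⟨∇F_i(x), d⟩. Then min{1, min_{i∈{1,…,m}} 2γ(1−σ)μ_i/L_i} ≤ t ≤ 1. -/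
open scoped RealInnerProductSpace

/-- Minimum of a function over the (nonempty) finite index type `Fin m`. -/
noncomputable def fmin {m : ℕ} [NeZero m] (f : Fin m → ℝ) : ℝ :=
  Finset.univ.inf' Finset.univ_nonempty f

/-- Bounds for the Armijo stepsize along the Barzilai–Borwein descent
direction with variable metric: if `μ_i ≤ α_i ≤ L_i`, `d ≠ 0` is the minimizer of the
subproblem, `t ∈ (0,1]` satisfies the Armijo condition and either `t = 1` or the Armijo
condition fails at stepsize `t/γ` for some index, then
`min{1, min_i 2γ(1−σ)μ_i/L_i} ≤ t ≤ 1`. -/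
theorem stmt11 {n m : ℕ} [NeZero m] (F : Fin m → EuclideanSpace ℝ (Fin n) → ℝ)
    (hF : ∀ i, ContDiff ℝ 1 (F i))
    (B : EuclideanSpace ℝ (Fin n) →ₗ[ℝ] EuclideanSpace ℝ (Fin n))
    (hsym : ∀ u v : EuclideanSpace ℝ (Fin n), ⟪B u, v⟫ = ⟪u, B v⟫)
    (hposdef : ∀ u : EuclideanSpace ℝ (Fin n), u ≠ 0 → 0 < ⟪u, B u⟫)
    (x : EuclideanSpace ℝ (Fin n))
    (L μ : Fin m → ℝ) (hμ : ∀ i, 0 < μ i) (hμL : ∀ i, μ i ≤ L i)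
    (hsmooth : ∀ i, ∀ y z : EuclideanSpace ℝ (Fin n),
      F i z ≤ F i y + ⟪gradient (F i) y, z - y⟫ + L i / 2 * ⟪z - y, B (z - y)⟫)
    (hsc : ∀ i, ∀ y z : EuclideanSpace ℝ (Fin n),
      F i y + ⟪gradient (F i) y, z - y⟫ + μ i / 2 * ⟪z - y, B (z - y)⟫ ≤ F i z)
    (α : Fin m → ℝ) (hα : ∀ i, μ i ≤ α i ∧ α i ≤ L i)
    (d : EuclideanSpace ℝ (Fin n)) (hd : d ≠ 0)
    (hdmin : ∀ e : EuclideanSpace ℝ (Fin n),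
      (fmax fun i => ⟪gradient (F i) x, d⟫ / α i) + ⟪d, B d⟫ / 2 ≤
        (fmax fun i => ⟪gradient (F i) x, e⟫ / α i) + ⟪e, B e⟫ / 2)
    (σ γ : ℝ) (hσ : σ ∈ Set.Ioc (0 : ℝ) (1 / 2)) (hγ : γ ∈ Set.Ioo (0 : ℝ) 1)
    (t : ℝ) (ht : t ∈ Set.Ioc (0 : ℝ) 1)
    (harmijo : ∀ i, F i (x + t • d) - F i x ≤ σ * t * ⟪gradient (F i) x, d⟫)
    (hmaximal : t = 1 ∨ ∃ i, σ * (t / γ) * ⟪gradient (F i) x, d⟫ <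
      F i (x + (t / γ) • d) - F i x) :
    min 1 (fmin fun i => 2 * γ * (1 - σ) * μ i / L i) ≤ t ∧ t ≤ 1 := by
  obtain ⟨ht0, ht1⟩ := ht
  refine ⟨?_, ht1⟩
  set K := (⟪d, B d⟫ : ℝ) with hK
  have hKpos : 0 < K := hposdef d hd
  set M := fmax (fun i => ⟪gradient (F i) x, d⟫ / α i) with hM
  have key : ∀ ε : ℝ, 0 < ε → ε < 1 → M ≤ (ε - 2) * K / 2 := by
    intro ε hε hε1
    have h := hdmin ((1 - ε) • d)
    have h1 : fmax (fun i => ⟪gradient (F i) x, (1 - ε) • d⟫ / α i) ≤ (1 - ε) * M := by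
      apply Finset.sup'_le
      intro i _
      have hαi : 0 < α i := lt_of_lt_of_le (hμ i) (hα i).1
      have hi : ⟪gradient (F i) x, d⟫ / α i ≤ M := by
        simp only [hM, fmax]
        exact Finset.le_sup' (fun j => ⟪gradient (F j) x, d⟫ / α j) (Finset.mem_univ i)
      rw [real_inner_smul_right]
      have : (1 - ε) * ⟪gradient (F i) x, d⟫ / α i
          = (1 - ε) * (⟪gradient (F i) x, d⟫ / α i) := by ring
      rw [this]
      nlinarith
    have h2 : (⟪(1 - ε) • d, B ((1 - ε) • d)⟫ : ℝ) = (1 - ε) ^ 2 * K := by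
      rw [map_smul, real_inner_smul_left, real_inner_smul_right]; ring
    rw [h2] at h
    nlinarith [le_trans h (by nlinarith : (fmax fun i => ⟪gradient (F i) x, (1 - ε) • d⟫ / α i)
      + (1 - ε) ^ 2 * K / 2 ≤ (1 - ε) * M + (1 - ε) ^ 2 * K / 2)]
  have hMK : M ≤ -K := by
    by_contra h
    push_neg at h
    set ε : ℝ := min (1 / 2) ((M + K) / K) with hε
    have hεpos : 0 < ε := lt_min (by norm_num) (div_pos (by linarith) hKpos)
    have hε1 : ε < 1 := lt_of_le_of_lt (min_le_left _ _) (by norm_num)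
    have hεle : ε ≤ (M + K) / K := min_le_right _ _
    have hεK : ε * K ≤ M + K := (le_div_iff₀ hKpos).mp hεle
    have := key ε hεpos hε1
    nlinarith
  rcases hmaximal with rfl | ⟨i, hi⟩
  · exact min_le_left _ _
  · have hμi := hμ i
    have hLi : 0 < L i := lt_of_lt_of_le (hμ i) (hμL i)
    have hαi : 0 < α i := lt_of_lt_of_le (hμ i) (hα i).1
    set s : ℝ := t / γ with hs
    have hspos : 0 < s := div_pos ht0 hγ.1
    have hgd : ⟪gradient (F i) x, d⟫ ≤ -(μ i * K) := by
      have h1 : ⟪gradient (F i) x, d⟫ / α i ≤ M := by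
        simp only [hM, fmax]
        exact Finset.le_sup' (fun j => ⟪gradient (F j) x, d⟫ / α j) (Finset.mem_univ i)
      have h2 : ⟪gradient (F i) x, d⟫ ≤ α i * M := by
        rw [div_le_iff₀ hαi] at h1; linarith [h1]
      have := (hα i).1
      nlinarith
    have hsm := hsmooth i x (x + s • d)
    have hz : (x + s • d) - x = s • d := by abel
    rw [hz, real_inner_smul_right, map_smul, real_inner_smul_left,
      real_inner_smul_right] at hsm
    -- hsm : F i (x + s•d) ≤ F i x + s * ⟪g,d⟫ + L i / 2 * (s * (s * K))
    have hfail : σ * s * ⟪gradient (F i) x, d⟫ <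
        s * ⟪gradient (F i) x, d⟫ + L i / 2 * (s * (s * K)) := by
      calc σ * s * ⟪gradient (F i) x, d⟫ < F i (x + s • d) - F i x := hi
        _ ≤ s * ⟪gradient (F i) x, d⟫ + L i / 2 * (s * (s * K)) := by linarith
    have hσ1 : σ ≤ 1 / 2 := hσ.2
    have hslb : 2 * (1 - σ) * μ i / L i < s := by
      rw [div_lt_iff₀ hLi]
      nlinarith [mul_pos hspos hKpos,
        mul_le_mul_of_nonneg_left hgd (mul_nonneg (by linarith : (0:ℝ) ≤ 1 - σ) hspos.le),
        sq_nonneg s]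
    have htlb : 2 * γ * (1 - σ) * μ i / L i < t := by
      have hts : s * γ = t := div_mul_cancel₀ t (ne_of_gt hγ.1)
      rw [← hts]
      have h2 : 2 * γ * (1 - σ) * μ i / L i = (2 * (1 - σ) * μ i / L i) * γ := by ring
      rw [h2]
      exact mul_lt_mul_of_pos_right hslb hγ.1
    calc min 1 (fmin fun i => 2 * γ * (1 - σ) * μ i / L i)
        ≤ fmin fun i => 2 * γ * (1 - σ) * μ i / L i := min_le_right _ _
      _ ≤ 2 * γ * (1 - σ) * μ i / L i := by
          simp only [fmin]; exact Finset.inf'_le _ (Finset.mem_univ i)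
      _ ≤ t := le_of_lt htlb
end

section
/- Let F : ℝ^n → ℝ^m be continuously differentiable, B a symmetric positive definite n×n real matrix, x ∈ ℝ^n, and δ, μ, α ∈ ℝ^m with 0 < δ_i ≤ μ_i and δ_i ≤ α_i for all i. Suppose each F_i is μ_i-strongly convex relative to ‖·‖_B. Then sup_{y∈ℝ^n} min_{i∈{1,…,m}} (F_i(x) − F_i(y))/δ_i ≤ r² · sup_{y∈ℝ^n} min_{i∈{1,…,m}} [ ⟨∇F_i(x), x−y⟩/α_i − (1/2)‖x−y‖_B² ], where r = max_{i∈{1,…,m}} α_i/δ_i. -/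
open scoped RealInnerProductSpace

/-- Under relative strong convexity (`0 < δ_i ≤ μ_i`, `δ_i ≤ α_i`),
`sup_y min_i (F_i(x) − F_i(y))/δ_i ≤ r² · sup_y min_i [⟨∇F_i(x), x−y⟩/α_i − ‖x−y‖_B²/2]`
where `r = max_i α_i/δ_i`. -/
theorem stmt15 {n m : ℕ} [NeZero m] (F : Fin m → EuclideanSpace ℝ (Fin n) → ℝ)
    (hF : ∀ i, ContDiff ℝ 1 (F i))
    (B : EuclideanSpace ℝ (Fin n) →ₗ[ℝ] EuclideanSpace ℝ (Fin n))
    (hsym : ∀ u v : EuclideanSpace ℝ (Fin n), ⟪B u, v⟫ = ⟪u, B v⟫)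
    (hposdef : ∀ u : EuclideanSpace ℝ (Fin n), u ≠ 0 → 0 < ⟪u, B u⟫)
    (x : EuclideanSpace ℝ (Fin n)) (δ μ α : Fin m → ℝ)
    (hδ : ∀ i, 0 < δ i) (hδμ : ∀ i, δ i ≤ μ i) (hδα : ∀ i, δ i ≤ α i)
    (hsc : ∀ i, ∀ y z : EuclideanSpace ℝ (Fin n),
      F i y + ⟪gradient (F i) y, z - y⟫ + μ i / 2 * ⟪z - y, B (z - y)⟫ ≤ F i z)
    (r : ℝ) (hr : r = fmax fun i => α i / δ i) :
    (⨆ y : EuclideanSpace ℝ (Fin n), fmin fun i => (F i x - F i y) / δ i) ≤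
      r ^ 2 * ⨆ y : EuclideanSpace ℝ (Fin n),
        fmin fun i => ⟪gradient (F i) x, x - y⟫ / α i - ⟪x - y, B (x - y)⟫ / 2 := by
  have hα : ∀ i, 0 < α i := fun i => lt_of_lt_of_le (hδ i) (hδα i)
  have hBnn : ∀ u : EuclideanSpace ℝ (Fin n), 0 ≤ ⟪u, B u⟫ := by
    intro u
    rcases eq_or_ne u 0 with h | h
    · simp [h]
    · exact (hposdef u h).le
  have hsym' : ∀ u v : EuclideanSpace ℝ (Fin n), ⟪u, B v⟫ = ⟪v, B u⟫ := by
    intro u v; rw [← hsym, real_inner_comm]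
  -- Cauchy–Schwarz-type bound
  have hCS : ∀ h d : EuclideanSpace ℝ (Fin n),
      ⟪h, B d⟫ ≤ ⟪h, B h⟫ / 2 + ⟪d, B d⟫ / 2 := by
    intro h d
    have h0 := hBnn (h - d)
    have hexp : ⟪h - d, B (h - d)⟫ = ⟪h, B h⟫ - 2 * ⟪h, B d⟫ + ⟪d, B d⟫ := by
      rw [map_sub, inner_sub_left, inner_sub_right, inner_sub_right, hsym' d h]
      ring
    linarith [hexp ▸ h0]
  -- B is surjective
  have hinj : Function.Injective B := by
    intro a b hab
    by_contra hne
    have hne' : a - b ≠ 0 := sub_ne_zero.mpr hne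
    have := hposdef _ hne'
    rw [map_sub, hab, sub_self, inner_zero_right] at this
    exact lt_irrefl 0 this
  have hsurj : Function.Surjective B :=
    (LinearMap.injective_iff_surjective).mp hinj
  set Φ : EuclideanSpace ℝ (Fin n) → ℝ := fun y =>
    fmin fun i => ⟪gradient (F i) x, x - y⟫ / α i - ⟪x - y, B (x - y)⟫ / 2 with hΦ
  -- boundedness of Φ
  have hbdd : BddAbove (Set.range Φ) := by
    obtain ⟨h0, hh0⟩ := hsurj ((α 0)⁻¹ • gradient (F 0) x)
    refine ⟨⟪h0, B h0⟫ / 2, ?_⟩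
    rintro _ ⟨y, rfl⟩
    have h1 : Φ y ≤ ⟪gradient (F 0) x, x - y⟫ / α 0 - ⟪x - y, B (x - y)⟫ / 2 :=
      Finset.inf'_le _ (Finset.mem_univ 0)
    have h2 : ⟪gradient (F 0) x, x - y⟫ / α 0 = ⟪B h0, x - y⟫ := by
      rw [hh0, real_inner_smul_left, div_eq_inv_mul]
    have h3 : ⟪B h0, x - y⟫ = ⟪h0, B (x - y)⟫ := hsym _ _
    have h4 := hCS h0 (x - y)
    rw [h2, h3] at h1
    linarith
  have hΦx : Φ x = 0 := by
    have : ∀ i : Fin m, ⟪gradient (F i) x, x - x⟫ / α i - ⟪x - x, B (x - x)⟫ / 2 = 0 := by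
      intro i; simp
    simp only [hΦ, fmin]
    rw [show (fun i : Fin m => ⟪gradient (F i) x, x - x⟫ / α i - ⟪x - x, B (x - x)⟫ / 2)
        = fun _ : Fin m => (0:ℝ) from funext this]
    exact Finset.inf'_const _ _
  have hS0 : 0 ≤ ⨆ y, Φ y := hΦx ▸ le_ciSup hbdd x
  have hri : ∀ i, α i / δ i ≤ r := by
    intro i
    rw [hr]
    unfold fmax
    exact Finset.le_sup' (fun j => α j / δ j) (Finset.mem_univ i)
  have hr1 : 1 ≤ r := le_trans ((one_le_div (hδ 0)).mpr (hδα 0)) (hri 0)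
  have hrpos : 0 < r := lt_of_lt_of_le one_pos hr1
  apply ciSup_le
  intro y
  set L : ℝ := fmin fun i => (F i x - F i y) / δ i with hL
  rcases le_or_gt L 0 with hL0 | hL0
  · exact hL0.trans (mul_nonneg (sq_nonneg r) hS0)
  · set d : EuclideanSpace ℝ (Fin n) := x - y with hd
    set y' : EuclideanSpace ℝ (Fin n) := x - r⁻¹ • d with hy'
    have hxy' : x - y' = r⁻¹ • d := by rw [hy']; abel
    -- key itemwise inequality
    have key : ∀ i : Fin m, L ≤ r ^ 2 *
        (⟪gradient (F i) x, x - y'⟫ / α i - ⟪x - y', B (x - y')⟫ / 2) := by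
      intro i
      have hsc' := hsc i x y
      have hfd : F i x - F i y ≤ ⟪gradient (F i) x, d⟫ - μ i / 2 * ⟪d, B d⟫ := by
        have h1 : ⟪gradient (F i) x, y - x⟫ = -⟪gradient (F i) x, d⟫ := by
          rw [hd, ← inner_neg_right]; congr 1; abel
        have h2 : ⟪y - x, B (y - x)⟫ = ⟪d, B d⟫ := by
          have : y - x = -d := by rw [hd]; abel
          rw [this, map_neg, inner_neg_neg]
        rw [h1, h2] at hsc'
        linarith
      have hBd := hBnn d
      have hLi : L ≤ (F i x - F i y) / δ i := Finset.inf'_le _ (Finset.mem_univ i)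
      have hstep : L ≤ ⟪gradient (F i) x, d⟫ / δ i - ⟪d, B d⟫ / 2 := by
        have h5 : (F i x - F i y) / δ i
            ≤ (⟪gradient (F i) x, d⟫ - μ i / 2 * ⟪d, B d⟫) / δ i :=
          (div_le_div_iff_of_pos_right (hδ i)).mpr hfd
        have h6 : (⟪gradient (F i) x, d⟫ - μ i / 2 * ⟪d, B d⟫) / δ i
            ≤ ⟪gradient (F i) x, d⟫ / δ i - ⟪d, B d⟫ / 2 := by
          rw [sub_div]
          have h7 : ⟪d, B d⟫ / 2 ≤ μ i / 2 * ⟪d, B d⟫ / δ i := by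
            rw [div_le_div_iff₀ two_pos (hδ i)]
            nlinarith [mul_le_mul_of_nonneg_left (hδμ i) hBd]
          linarith
        linarith
      have hgpos : 0 < ⟪gradient (F i) x, d⟫ := by
        have : 0 < ⟪gradient (F i) x, d⟫ / δ i := by linarith
        exact (div_pos_iff.mp this).resolve_right (fun h => absurd h.2 (not_lt.mpr (hδ i).le)) |>.1
      have hscale : ⟪gradient (F i) x, d⟫ / δ i ≤ r * ⟪gradient (F i) x, d⟫ / α i := by
        rw [div_le_div_iff₀ (hδ i) (hα i)]
        have := hri i
        rw [div_le_iff₀ (hδ i)] at this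
        nlinarith
      have hterm : r ^ 2 * (⟪gradient (F i) x, x - y'⟫ / α i - ⟪x - y', B (x - y')⟫ / 2)
          = r * ⟪gradient (F i) x, d⟫ / α i - ⟪d, B d⟫ / 2 := by
        have hrne : r ≠ 0 := hrpos.ne'
        have hG : ⟪gradient (F i) x, x - y'⟫ = r⁻¹ * ⟪gradient (F i) x, d⟫ := by
          rw [hxy', real_inner_smul_right]
        have hQ : ⟪x - y', B (x - y')⟫ = r⁻¹ * (r⁻¹ * ⟪d, B d⟫) := by
          rw [hxy', map_smul, real_inner_smul_left, real_inner_smul_right]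
        rw [hG, hQ]
        set G : ℝ := ⟪gradient (F i) x, d⟫
        set Q : ℝ := ⟪d, B d⟫
        field_simp
      rw [hterm]
      linarith
    -- conclude
    obtain ⟨i, _, hi⟩ := Finset.exists_mem_eq_inf' Finset.univ_nonempty
      (fun i => ⟪gradient (F i) x, x - y'⟫ / α i - ⟪x - y', B (x - y')⟫ / 2)
    have h1 : L ≤ r ^ 2 * Φ y' := by
      rw [hΦ]; show L ≤ r^2 * fmin _
      rw [fmin, hi]; exact key i
    have h2 : Φ y' ≤ ⨆ y, Φ y := le_ciSup hbdd y'
    calc L ≤ r ^ 2 * Φ y' := h1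
    _ ≤ r ^ 2 * ⨆ y, Φ y := by nlinarith [sq_nonneg r]
end

section
/- Let F : ℝ^n → ℝ^m be continuously differentiable, B a symmetric positive definite n×n real matrix, and suppose each F_i is L_i-smooth and μ_i-strongly convex relative to ‖·‖_B with 0 < δ_i ≤ μ_i ≤ L_i. Let x ∈ ℝ^n, let α_1,…,α_m satisfy μ_i ≤ α_i ≤ L_i, let d be the unique minimizer over ℝ^n of d ↦ max_{i∈{1,…,m}} ⟨∇F_i(x), d⟩/α_i + (1/2)‖d‖_B², let σ ∈ (0, 1/2] and γ ∈ (0,1), and suppose t > 0 satisfies the Armijo condition at x in direction d and t ≥ 2γ(1−σ)·min_{i∈{1,…,m}} μ_i/L_i. Then, with u_0^δ(z) := sup_{y∈ℝ^n} min_{i∈{1,…,m}} (F_i(z) − F_i(y))/δ_i, one has u_0^δ(x + t d) ≤ (1 − 2γσ(1−σ)·min_{i∈{1,…,m}} μ_i δ_i²/L_i³) · u_0^δ(x). -/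
open scoped RealInnerProductSpace

lemma fmin_le {m : ℕ} [NeZero m] (f : Fin m → ℝ) (i : Fin m) : fmin f ≤ f i :=
  Finset.inf'_le f (Finset.mem_univ i)

lemma exists_fmax {m : ℕ} [NeZero m] (f : Fin m → ℝ) : ∃ i : Fin m, fmax f = f i := by
  obtain ⟨i, -, h⟩ := Finset.exists_mem_eq_sup' (Finset.univ_nonempty) f
  exact ⟨i, h⟩

lemma exists_fmin {m : ℕ} [NeZero m] (f : Fin m → ℝ) : ∃ i : Fin m, fmin f = f i := by
  obtain ⟨i, -, h⟩ := Finset.exists_mem_eq_inf' (Finset.univ_nonempty) f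
  exact ⟨i, h⟩

set_option maxHeartbeats 2000000 in
/-- One-step linear decrease of the merit function
`u₀^δ(z) = sup_y min_i (F_i(z) − F_i(y))/δ_i` along the Barzilai–Borwein descent
direction with variable metric:
`u₀^δ(x + t d) ≤ (1 − 2γσ(1−σ)·min_i μ_i δ_i²/L_i³) · u₀^δ(x)`. -/
theorem stmt16 {n m : ℕ} [NeZero m] (F : Fin m → EuclideanSpace ℝ (Fin n) → ℝ)
    (hF : ∀ i, ContDiff ℝ 1 (F i))
    (B : EuclideanSpace ℝ (Fin n) →ₗ[ℝ] EuclideanSpace ℝ (Fin n))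
    (hsym : ∀ u v : EuclideanSpace ℝ (Fin n), ⟪B u, v⟫ = ⟪u, B v⟫)
    (hposdef : ∀ u : EuclideanSpace ℝ (Fin n), u ≠ 0 → 0 < ⟪u, B u⟫)
    (L μ δ : Fin m → ℝ) (hδ : ∀ i, 0 < δ i) (hδμ : ∀ i, δ i ≤ μ i) (hμL : ∀ i, μ i ≤ L i)
    (hsmooth : ∀ i, ∀ y z : EuclideanSpace ℝ (Fin n),
      F i z ≤ F i y + ⟪gradient (F i) y, z - y⟫ + L i / 2 * ⟪z - y, B (z - y)⟫)
    (hsc : ∀ i, ∀ y z : EuclideanSpace ℝ (Fin n),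
      F i y + ⟪gradient (F i) y, z - y⟫ + μ i / 2 * ⟪z - y, B (z - y)⟫ ≤ F i z)
    (x : EuclideanSpace ℝ (Fin n)) (α : Fin m → ℝ) (hα : ∀ i, μ i ≤ α i ∧ α i ≤ L i)
    (d : EuclideanSpace ℝ (Fin n))
    (hdmin : ∀ e : EuclideanSpace ℝ (Fin n),
      (fmax fun i => ⟪gradient (F i) x, d⟫ / α i) + ⟪d, B d⟫ / 2 ≤
        (fmax fun i => ⟪gradient (F i) x, e⟫ / α i) + ⟪e, B e⟫ / 2)
    (σ γ : ℝ) (hσ : σ ∈ Set.Ioc (0 : ℝ) (1 / 2)) (hγ : γ ∈ Set.Ioo (0 : ℝ) 1)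
    (t : ℝ) (ht : 0 < t)
    (harmijo : ∀ i, F i (x + t • d) - F i x ≤ σ * t * ⟪gradient (F i) x, d⟫)
    (htlow : 2 * γ * (1 - σ) * fmin (fun i => μ i / L i) ≤ t)
    (u : EuclideanSpace ℝ (Fin n) → ℝ)
    (hu : ∀ z, u z = ⨆ y : EuclideanSpace ℝ (Fin n), fmin fun i => (F i z - F i y) / δ i) :
    u (x + t • d) ≤
      (1 - 2 * γ * σ * (1 - σ) * fmin fun i => μ i * δ i ^ 2 / L i ^ 3) * u x := by
  have hμ0 : ∀ i, 0 < μ i := fun i => lt_of_lt_of_le (hδ i) (hδμ i)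
  have hL0 : ∀ i, 0 < L i := fun i => lt_of_lt_of_le (hμ0 i) (hμL i)
  have hα0 : ∀ i, 0 < α i := fun i => lt_of_lt_of_le (hμ0 i) (hα i).1
  have hσ0 : 0 < σ := hσ.1
  have h1σ : 0 < 1 - σ := by have := hσ.2; linarith
  have hγ0 : 0 < γ := hγ.1
  have hBnn : ∀ w : EuclideanSpace ℝ (Fin n), 0 ≤ ⟪w, B w⟫ := by
    intro w
    rcases eq_or_ne w 0 with h | h
    · simp [h]
    · exact (hposdef w h).le
  set D : ℝ := ⟪d, B d⟫ with hDdef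
  have hD0 : 0 ≤ D := hBnn d
  -- bilinear expansion
  have expand2 : ∀ (a b : ℝ) (w : EuclideanSpace ℝ (Fin n)),
      ⟪a • d + b • w, B (a • d + b • w)⟫
        = a ^ 2 * D + 2 * a * b * ⟪B d, w⟫ + b ^ 2 * ⟪w, B w⟫ := by
    intro a b w
    have h1 : ⟪d, B w⟫ = ⟪B d, w⟫ := (hsym d w).symm
    have h2 : ⟪w, B d⟫ = ⟪B d, w⟫ := by rw [real_inner_comm, hsym]
    simp only [map_add, map_smul, inner_add_left, inner_add_right, real_inner_smul_left,
      real_inner_smul_right, h1, h2, hDdef]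
    ring
  -- step 1 : each ⟪g i, d⟫ ≤ -(α i * D)/2
  have step1 : ∀ i, ⟪gradient (F i) x, d⟫ ≤ -(α i * D) / 2 := by
    intro i
    have h0 := hdmin 0
    have hz : (fmax fun i => ⟪gradient (F i) x, (0 : EuclideanSpace ℝ (Fin n))⟫ / α i)
        + ⟪(0 : EuclideanSpace ℝ (Fin n)), B 0⟫ / 2 = 0 := by
      simp [fmax]
    rw [hz] at h0
    have hi : ⟪gradient (F i) x, d⟫ / α i ≤ fmax fun j => ⟪gradient (F j) x, d⟫ / α j :=
      le_fmax (fun j => ⟪gradient (F j) x, d⟫ / α j) i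
    have h3 : ⟪gradient (F i) x, d⟫ / α i ≤ -(D / 2) := by linarith
    rw [div_le_iff₀ (hα0 i)] at h3
    nlinarith [hα0 i]
  -- step 2 : variational inequality  -⟪B d, w⟫ ≤ fmax (⟪g i, w⟫/α i)
  have step2 : ∀ w : EuclideanSpace ℝ (Fin n),
      -⟪B d, w⟫ ≤ fmax fun i => ⟪gradient (F i) x, w⟫ / α i := by
    intro w
    rcases eq_or_ne w 0 with h0 | h0
    · simp [h0, fmax]
    · have hW : 0 < ⟪w, B w⟫ := hposdef w h0
      by_contra hcon
      push_neg at hcon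
      set C : ℝ := fmax fun i => ⟪gradient (F i) x, w⟫ / α i with hC
      set X : ℝ := ⟪B d, w⟫ with hX
      set s : ℝ := (-(C + X)) / ⟪w, B w⟫ with hs
      have hspos : 0 < s := div_pos (by linarith) hW
      have hkey := hdmin (d + s • w)
      have hexp : ⟪d + s • w, B (d + s • w)⟫ = D + 2 * s * X + s ^ 2 * ⟪w, B w⟫ := by
        have := expand2 1 s w
        simpa using this
      rw [hexp] at hkey
      have hsub : (fmax fun i => ⟪gradient (F i) x, d + s • w⟫ / α i)
          ≤ (fmax fun i => ⟪gradient (F i) x, d⟫ / α i) + s * C := by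
        apply fmax_le
        intro i
        have heq : ⟪gradient (F i) x, d + s • w⟫ / α i
            = ⟪gradient (F i) x, d⟫ / α i + s * (⟪gradient (F i) x, w⟫ / α i) := by
          rw [inner_add_right, real_inner_smul_right, add_div]
          ring
        rw [heq]
        have h1 : ⟪gradient (F i) x, d⟫ / α i ≤ fmax fun j => ⟪gradient (F j) x, d⟫ / α j :=
          le_fmax (fun j => ⟪gradient (F j) x, d⟫ / α j) i
        have h2 : ⟪gradient (F i) x, w⟫ / α i ≤ C :=
          le_fmax (fun j => ⟪gradient (F j) x, w⟫ / α j) i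
        nlinarith [hspos.le]
      have hmain : 0 ≤ s * (C + X) + s ^ 2 * ⟪w, B w⟫ / 2 := by linarith
      have hsW : s * ⟪w, B w⟫ = -(C + X) := by
        rw [hs]; exact div_mul_cancel₀ _ hW.ne'
      nlinarith [mul_pos hspos hspos, hW, hspos]
  -- Cauchy–Schwarz for B
  have hCS : ∀ w : EuclideanSpace ℝ (Fin n), ⟪B d, w⟫ ^ 2 ≤ D * ⟪w, B w⟫ := by
    intro w
    rcases eq_or_ne w 0 with h0 | h0
    · simp [h0]
    · have hW : 0 < ⟪w, B w⟫ := hposdef w h0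
      have key := hBnn (⟪w, B w⟫ • d + (-⟪B d, w⟫) • w)
      rw [expand2] at key
      nlinarith [hW]
  -- the three constants
  set m1 : ℝ := fmin (fun i => μ i / L i) with hm1
  set qv : ℝ := fmin (fun i => μ i * δ i / L i ^ 2) with hqv
  set m3 : ℝ := fmin fun i => μ i * δ i ^ 2 / L i ^ 3 with hm3
  have hqvle : ∀ i, qv ≤ μ i * δ i / L i ^ 2 := fun i =>
    fmin_le (fun i => μ i * δ i / L i ^ 2) i
  have hm1le : ∀ i, m1 ≤ μ i / L i := fun i => fmin_le (fun i => μ i / L i) i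
  have hqvpos : 0 < qv := by
    obtain ⟨i, h⟩ := exists_fmin (fun i => μ i * δ i / L i ^ 2)
    rw [hqv, h]
    exact div_pos (mul_pos (hμ0 i) (hδ i)) (pow_pos (hL0 i) 2)
  have hm1pos : 0 < m1 := by
    obtain ⟨i, h⟩ := exists_fmin (fun i => μ i / L i)
    rw [hm1, h]
    exact div_pos (hμ0 i) (hL0 i)
  -- key bound on the merit terms at x
  have keybound : ∀ y : EuclideanSpace ℝ (Fin n),
      (fmin fun i => (F i x - F i y) / δ i) ≤ D / (2 * qv) := by
    intro y
    obtain ⟨k, hk⟩ := exists_fmax (fun i => ⟪gradient (F i) x, y - x⟫ / α i)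
    set w := y - x with hw
    set W : ℝ := ⟪w, B w⟫ with hWdef
    have hW0 : 0 ≤ W := hBnn w
    set X : ℝ := ⟪B d, w⟫ with hXdef
    have h1 : (fmin fun i => (F i x - F i y) / δ i) ≤ (F k x - F k y) / δ k :=
      fmin_le (fun i => (F i x - F i y) / δ i) k
    have h2 : F k x - F k y ≤ -⟪gradient (F k) x, w⟫ - μ k / 2 * W := by
      have h := hsc k x y
      rw [← hw] at h
      linarith
    have hst := step2 w
    rw [hk] at hst
    have h3 : -X ≤ ⟪gradient (F k) x, w⟫ / α k := hst
    have hck : -⟪gradient (F k) x, w⟫ ≤ α k * X := by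
      have h4 := (le_div_iff₀ (hα0 k)).mp h3
      linarith
    have hnum : -⟪gradient (F k) x, w⟫ - μ k / 2 * W ≤ L k ^ 2 * D / (2 * μ k) := by
      rcases le_or_gt (-⟪gradient (F k) x, w⟫) 0 with hc | hc
      · have hrhs : 0 ≤ L k ^ 2 * D / (2 * μ k) := by
          apply div_nonneg _ (by linarith [hμ0 k])
          exact mul_nonneg (by positivity) hD0
        nlinarith [mul_nonneg (hμ0 k).le hW0]
      · have hX0 : 0 < X := by nlinarith [hα0 k]
        have hXD : X ^ 2 ≤ D * W := hCS w
        have hDpos : 0 < D := by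
          rcases hD0.lt_or_eq with h | h
          · exact h
          · exfalso; nlinarith
        have hcLX : -⟪gradient (F k) x, w⟫ ≤ L k * X := by
          nlinarith [(hα k).2, hX0.le]
        rw [le_div_iff₀ (by linarith [hμ0 k] : (0:ℝ) < 2 * μ k)]
        have e1 : μ k ^ 2 * X ^ 2 ≤ μ k ^ 2 * (D * W) :=
          mul_le_mul_of_nonneg_left hXD (sq_nonneg (μ k))
        have e2 : 2 * μ k * -⟪gradient (F k) x, w⟫ * D ≤ 2 * μ k * (L k * X) * D :=
          mul_le_mul_of_nonneg_right
            (mul_le_mul_of_nonneg_left hcLX (by linarith [hμ0 k])) hD0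
        nlinarith [e1, e2, sq_nonneg (L k * D - μ k * X), hDpos]
    have h5 : (F k x - F k y) / δ k ≤ (L k ^ 2 * D / (2 * μ k)) / δ k := by
      rw [div_le_div_iff₀ (hδ k) (hδ k)]
      have := le_trans h2 hnum
      nlinarith [hδ k]
    have h6 : (L k ^ 2 * D / (2 * μ k)) / δ k ≤ D / (2 * qv) := by
      rw [div_div, div_le_div_iff₀
        (by nlinarith [hμ0 k, hδ k] : (0:ℝ) < 2 * μ k * δ k)
        (by linarith [hqvpos] : (0:ℝ) < 2 * qv)]
      have hq2 : qv * L k ^ 2 ≤ μ k * δ k := (le_div_iff₀ (pow_pos (hL0 k) 2)).mp (hqvle k)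
      nlinarith [hD0, hqvpos]
    linarith
  -- boundedness and nonnegativity of u x
  have bddx : BddAbove (Set.range fun y : EuclideanSpace ℝ (Fin n) =>
      fmin fun i => (F i x - F i y) / δ i) := by
    refine ⟨D / (2 * qv), ?_⟩
    rintro _ ⟨y, rfl⟩
    exact keybound y
  have hux_le : u x ≤ D / (2 * qv) := by
    rw [hu]
    exact ciSup_le keybound
  have hux_nn : 0 ≤ u x := by
    rw [hu]
    have h := le_ciSup bddx x
    have hz : (fmin fun i => (F i x - F i x) / δ i) = 0 := by
      simp [fmin]
    linarith
  -- decrease step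
  have hdec : u (x + t • d) ≤ u x - σ * t * D / 2 := by
    rw [hu]
    apply ciSup_le
    intro y
    obtain ⟨k, hk⟩ := exists_fmin (fun i => (F i x - F i y) / δ i)
    have harm := harmijo k
    have hgd := step1 k
    have hA : F k (x + t • d) - F k x ≤ σ * t * (-(α k * D) / 2) := by
      refine le_trans harm ?_
      have hσt : 0 < σ * t := mul_pos hσ0 ht
      nlinarith [hσt]
    have h3 : (F k (x + t • d) - F k x) / δ k ≤ -(σ * t * D / 2) := by
      rw [div_le_iff₀ (hδ k)]
      have hδα : δ k ≤ α k := le_trans (hδμ k) (hα k).1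
      have hσtD : 0 ≤ σ * t * D := by positivity
      nlinarith [hδ k, hσ0, ht]
    have hdiv : (F k (x + t • d) - F k y) / δ k
        = (F k x - F k y) / δ k + (F k (x + t • d) - F k x) / δ k := by
      rw [← add_div]
      ring_nf
    have h7 : (fmin fun i => (F i x - F i y) / δ i) ≤ u x := by
      rw [hu]
      exact le_ciSup bddx y
    calc (fmin fun i => (F i (x + t • d) - F i y) / δ i)
        ≤ (F k (x + t • d) - F k y) / δ k := fmin_le _ k
      _ = (F k x - F k y) / δ k + (F k (x + t • d) - F k x) / δ k := hdiv
      _ ≤ (F k x - F k y) / δ k - σ * t * D / 2 := by linarith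
      _ = (fmin fun i => (F i x - F i y) / δ i) - σ * t * D / 2 := by rw [← hk]
      _ ≤ u x - σ * t * D / 2 := by linarith
  -- the arithmetic on the constants : m3 ≤ m1 * qv
  have key : m3 ≤ m1 * qv := by
    obtain ⟨p, hp⟩ := exists_fmin (fun i => μ i / L i)
    obtain ⟨k, hkk⟩ := exists_fmin (fun i => μ i * δ i / L i ^ 2)
    rw [hm1, hp, hqv, hkk]
    rcases le_or_gt (δ k / L k) (μ p / L p) with hcase | hcase
    · have hstep : m3 ≤ μ k * δ k ^ 2 / L k ^ 3 :=
        fmin_le (fun i => μ i * δ i ^ 2 / L i ^ 3) k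
      have hid : μ k * δ k ^ 2 / L k ^ 3 = (μ k * δ k / L k ^ 2) * (δ k / L k) := by
        field_simp
      have hnn : 0 ≤ μ k * δ k / L k ^ 2 :=
        (div_pos (mul_pos (hμ0 k) (hδ k)) (pow_pos (hL0 k) 2)).le
      calc m3 ≤ μ k * δ k ^ 2 / L k ^ 3 := hstep
        _ = (μ k * δ k / L k ^ 2) * (δ k / L k) := hid
        _ ≤ (μ k * δ k / L k ^ 2) * (μ p / L p) := by
            exact mul_le_mul_of_nonneg_left hcase hnn
        _ = μ p / L p * (μ k * δ k / L k ^ 2) := by ring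
    · have hstep : m3 ≤ μ p * δ p ^ 2 / L p ^ 3 :=
        fmin_le (fun i => μ i * δ i ^ 2 / L i ^ 3) p
      have hid : μ p * δ p ^ 2 / L p ^ 3 = (μ p / L p) * ((δ p / L p) * (δ p / L p)) := by
        field_simp
      have hb_le_a : δ p / L p ≤ μ p / L p := by
        rw [div_le_div_iff₀ (hL0 p) (hL0 p)]
        nlinarith [hδμ p, hL0 p]
      have ha_le_c : μ p / L p ≤ μ k / L k := by
        have h := hm1le k
        rw [hm1, hp] at h
        exact h
      have hsq : (δ p / L p) * (δ p / L p) ≤ (μ k / L k) * (δ k / L k) := by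
        have hb1 : δ p / L p ≤ μ k / L k := le_trans hb_le_a ha_le_c
        have hb2 : δ p / L p ≤ δ k / L k := le_trans hb_le_a hcase.le
        have hbnn : 0 ≤ δ p / L p := (div_pos (hδ p) (hL0 p)).le
        have hcnn : 0 ≤ μ k / L k := (div_pos (hμ0 k) (hL0 k)).le
        exact mul_le_mul hb1 hb2 hbnn hcnn
      have hid2 : μ k * δ k / L k ^ 2 = (μ k / L k) * (δ k / L k) := by
        field_simp
      calc m3 ≤ μ p * δ p ^ 2 / L p ^ 3 := hstep
        _ = (μ p / L p) * ((δ p / L p) * (δ p / L p)) := hid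
        _ ≤ (μ p / L p) * ((μ k / L k) * (δ k / L k)) :=
            mul_le_mul_of_nonneg_left hsq (div_pos (hμ0 p) (hL0 p)).le
        _ = μ p / L p * (μ k * δ k / L k ^ 2) := by rw [hid2]
  -- assemble the final inequality
  have hc_le : 2 * γ * σ * (1 - σ) * m3 ≤ σ * t * qv := by
    have hσqv : 0 ≤ σ * qv := mul_nonneg hσ0.le hqvpos.le
    have hA : σ * qv * (2 * γ * (1 - σ) * m1) ≤ σ * qv * t :=
      mul_le_mul_of_nonneg_left htlow hσqv
    have hcnn : 0 ≤ 2 * γ * σ * (1 - σ) := by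
      have := mul_nonneg (mul_nonneg (mul_nonneg (by norm_num : (0:ℝ) ≤ 2) hγ0.le) hσ0.le) h1σ.le
      linarith
    have hB : 2 * γ * σ * (1 - σ) * m3 ≤ 2 * γ * σ * (1 - σ) * (m1 * qv) :=
      mul_le_mul_of_nonneg_left key hcnn
    nlinarith [hA, hB]
  have hfinal1 : σ * t * qv * u x ≤ σ * t * (D / 2) := by
    have h0 : 0 ≤ σ * t * qv := mul_nonneg (mul_nonneg hσ0.le ht.le) hqvpos.le
    have h2 := mul_le_mul_of_nonneg_left hux_le h0
    have heq : σ * t * qv * (D / (2 * qv)) = σ * t * (D / 2) := by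
      field_simp
    rw [heq] at h2
    exact h2
  have h8 : u (x + t • d) ≤ u x - σ * t * qv * u x := by
    have heq : σ * t * (D / 2) = σ * t * D / 2 := by ring
    rw [heq] at hfinal1
    linarith [hdec, hfinal1]
  have h9 : 0 ≤ (σ * t * qv - 2 * γ * σ * (1 - σ) * m3) * u x :=
    mul_nonneg (by linarith [hc_le]) hux_nn
  nlinarith [h8, h9]
end

section
/- Let 0 < a ≤ b, let B be a symmetric n×n real matrix with aI ⪯ B ⪯ bI, let g_1,…,g_m ∈ ℝ^n, and let 𝓛 be a nonempty proper subset of {1,…,m}. Let α_min > 0 and δ_i > 0 and α_1,…,α_m satisfy α_i = α_min for i ∈ 𝓛 and α_i ≥ δ_i for i ∉ 𝓛. Suppose λ ∈ Δ_m minimizes over Δ_m the function λ ↦ (1/2)⟨Σ_{i=1}^m λ_i g_i/α_i, B^{-1}(Σ_{i=1}^m λ_i g_i/α_i)⟩, and suppose ε := min_{μ∈Δ_𝓛} ‖Σ_{i∈𝓛} μ_i g_i‖ > 0, where Δ_𝓛 is the set of nonnegative weights on 𝓛 summing to 1. Then Σ_{i∈𝓛} λ_i ≤ (α_min/ε)·(1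 + b/a)·max_{i∉𝓛} ‖g_i‖/δ_i. -/
open scoped RealInnerProductSpace

section Aux

variable {n : ℕ} (a b : ℝ) (B : EuclideanSpace ℝ (Fin n) →ₗ[ℝ] EuclideanSpace ℝ (Fin n))

/-- For a symmetric positive operator with `B ⪯ bI`, `‖Bx‖² ≤ b⟪x,Bx⟫`. -/
lemma aux_norm_sq_le (ha : 0 < a) (hab : a ≤ b)
    (hsym : ∀ u v : EuclideanSpace ℝ (Fin n), ⟪B u, v⟫ = ⟪u, B v⟫)
    (hBa : ∀ u : EuclideanSpace ℝ (Fin n), a * ‖u‖ ^ 2 ≤ ⟪u, B u⟫)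
    (hBb : ∀ u : EuclideanSpace ℝ (Fin n), ⟪u, B u⟫ ≤ b * ‖u‖ ^ 2)
    (x : EuclideanSpace ℝ (Fin n)) :
    ‖B x‖ ^ 2 ≤ b * ⟪x, B x⟫ := by
  by_cases hy : B x = 0
  · simp only [hy, norm_zero, inner_zero_right, mul_zero]
    norm_num
  · set y := B x with hydef
    have hy0 : 0 < ‖y‖ := norm_pos_iff.mpr hy
    have hc : 0 < ⟪y, B y⟫ := lt_of_lt_of_le (by positivity) (hBa y)
    set c := ⟪y, B y⟫ with hcdef
    have hd : ⟪x, B y⟫ = ‖y‖ ^ 2 := by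
      rw [← hsym x y, ← real_inner_self_eq_norm_sq]
    have hd' : ⟪y, B x⟫ = ‖y‖ ^ 2 := by
      rw [← hydef, real_inner_self_eq_norm_sq]
    have key : 0 ≤ ⟪c • x - (‖y‖^2) • y, B (c • x - (‖y‖^2) • y)⟫ :=
      le_trans (by positivity) (hBa _)
    have expand : ⟪c • x - (‖y‖^2) • y, B (c • x - (‖y‖^2) • y)⟫
        = c^2 * ⟪x, B x⟫ - 2 * c * (‖y‖^2)^2 + (‖y‖^2)^2 * c := by
      rw [map_sub, map_smul, map_smul, inner_sub_left, inner_sub_right, inner_sub_right]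
      rw [inner_smul_left, inner_smul_left, inner_smul_right, inner_smul_right,
        inner_smul_right, inner_smul_right, inner_smul_left, inner_smul_left]
      simp only [RCLike.star_def, starRingEnd_apply, star_trivial]
      rw [hd, hd', ← hcdef]
      ring
    rw [expand] at key
    have hq : (‖y‖^2)^2 ≤ c * ⟪x, B x⟫ := by nlinarith
    have hcb : c ≤ b * ‖y‖^2 := hBb y
    have hxBx : 0 ≤ ⟪x, B x⟫ := le_trans (by positivity) (hBa x)
    show ‖y‖ ^ 2 ≤ b * ⟪x, B x⟫
    nlinarith [hq, mul_le_mul_of_nonneg_right hcb hxBx, pow_pos hy0 2]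

/-- `⟪u, B⁻¹ u⟫ ≤ ‖u‖²/a`. -/
lemma aux_inner_inv_le (Binv : EuclideanSpace ℝ (Fin n) →ₗ[ℝ] EuclideanSpace ℝ (Fin n))
    (ha : 0 < a)
    (hBa : ∀ u : EuclideanSpace ℝ (Fin n), a * ‖u‖ ^ 2 ≤ ⟪u, B u⟫)
    (hinv1 : ∀ u, B (Binv u) = u)
    (u : EuclideanSpace ℝ (Fin n)) :
    ⟪u, Binv u⟫ ≤ ‖u‖ ^ 2 / a := by
  set x := Binv u with hx
  have hux : B x = u := hinv1 u
  have h1 : a * ‖x‖ ^ 2 ≤ ⟪x, u⟫ := by have := hBa x; rwa [hux] at this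
  have h2 : ⟪x, u⟫ ≤ ‖x‖ * ‖u‖ := real_inner_le_norm x u
  rw [show ⟪u, Binv u⟫ = ⟪x, u⟫ from real_inner_comm x u, le_div_iff₀ ha]
  nlinarith [norm_nonneg x, norm_nonneg u, sq_nonneg (a * ‖x‖ - ‖u‖),
    mul_le_mul_of_nonneg_left h2 ha.le, mul_le_mul_of_nonneg_left h1 ha.le]

end Aux

/-- Bound on the sum of the dual variables attached to the "linear"
index set `𝓛`: if `λ` minimizes the dual objective
`λ ↦ ⟨∑ λ_i g_i/α_i, B⁻¹(∑ λ_i g_i/α_i)⟩/2` over the unit simplex and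
`ε = min_{μ ∈ Δ_𝓛} ‖∑_{i∈𝓛} μ_i g_i‖ > 0`, then
`∑_{i∈𝓛} λ_i ≤ (α_min/ε)(1 + b/a) max_{i∉𝓛} ‖g_i‖/δ_i`. -/
theorem stmt17 {n m : ℕ} (a b : ℝ) (ha : 0 < a) (hab : a ≤ b)
    (B Binv : EuclideanSpace ℝ (Fin n) →ₗ[ℝ] EuclideanSpace ℝ (Fin n))
    (hsym : ∀ u v : EuclideanSpace ℝ (Fin n), ⟪B u, v⟫ = ⟪u, B v⟫)
    (hBa : ∀ u : EuclideanSpace ℝ (Fin n), a * ‖u‖ ^ 2 ≤ ⟪u, B u⟫)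
    (hBb : ∀ u : EuclideanSpace ℝ (Fin n), ⟪u, B u⟫ ≤ b * ‖u‖ ^ 2)
    (hinv1 : ∀ u, B (Binv u) = u) (hinv2 : ∀ u, Binv (B u) = u)
    (g : Fin m → EuclideanSpace ℝ (Fin n))
    (ls : Finset (Fin m)) (hls : ls.Nonempty) (hlsc : lsᶜ.Nonempty)
    (αmin : ℝ) (hαmin : 0 < αmin) (δ α : Fin m → ℝ)
    (hδ : ∀ i ∉ ls, 0 < δ i)
    (hα1 : ∀ i ∈ ls, α i = αmin) (hα2 : ∀ i ∉ ls, δ i ≤ α i)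
    (lam : Fin m → ℝ) (hlam0 : ∀ i, 0 ≤ lam i) (hlam1 : ∑ i, lam i = 1)
    (hlamMin : ∀ lam' : Fin m → ℝ, (∀ i, 0 ≤ lam' i) → ∑ i, lam' i = 1 →
      ⟪∑ i, (lam i / α i) • g i, Binv (∑ i, (lam i / α i) • g i)⟫ / 2 ≤
        ⟪∑ i, (lam' i / α i) • g i, Binv (∑ i, (lam' i / α i) • g i)⟫ / 2)
    (ε : ℝ) (hε : 0 < ε)
    (hεlb : ∀ μ : Fin m → ℝ, (∀ i, 0 ≤ μ i) → ∑ i ∈ ls, μ i = 1 →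
      ε ≤ ‖∑ i ∈ ls, μ i • g i‖)
    (hεatt : ∃ μ : Fin m → ℝ, (∀ i, 0 ≤ μ i) ∧ ∑ i ∈ ls, μ i = 1 ∧
      ‖∑ i ∈ ls, μ i • g i‖ = ε) :
    ∑ i ∈ ls, lam i ≤
      αmin / ε * (1 + b / a) * lsᶜ.sup' hlsc (fun i => ‖g i‖ / δ i) := by
  classical
  have hαpos : ∀ i, 0 < α i := by
    intro i
    by_cases h : i ∈ ls
    · rw [hα1 i h]; exact hαmin
    · exact lt_of_lt_of_le (hδ i h) (hα2 i h)
  set M := lsᶜ.sup' hlsc (fun i => ‖g i‖ / δ i) with hMdef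
  obtain ⟨j, hj⟩ := hlsc
  have hjls : j ∉ ls := Finset.mem_compl.mp hj
  have hM0 : 0 ≤ M :=
    le_trans (div_nonneg (norm_nonneg _) (hδ j hjls).le) (Finset.le_sup' (fun i => ‖g i‖ / δ i) hj)
  have hMi : ∀ i ∉ ls, ‖g i‖ / α i ≤ M := by
    intro i hi
    have h1 : ‖g i‖ / α i ≤ ‖g i‖ / δ i :=
      div_le_div_of_nonneg_left (norm_nonneg _) (hδ i hi) (hα2 i hi)
    exact le_trans h1 (Finset.le_sup' (fun i => ‖g i‖ / δ i) (Finset.mem_compl.mpr hi))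
  set w := ∑ i, (lam i / α i) • g i with hw
  -- Step 1: optimal value at most value at indicator of j
  have hwBw : ⟪w, Binv w⟫ ≤ M ^ 2 / a := by
    have hopt := hlamMin (fun i => if i = j then (1:ℝ) else 0)
      (by intro i; by_cases h : i = j <;> simp [h])
      (by rw [Finset.sum_ite_eq', if_pos (Finset.mem_univ j)])
    have hsum : ∑ i, ((if i = j then (1:ℝ) else 0) / α i) • g i = (α j)⁻¹ • g j := by
      rw [Finset.sum_eq_single j]
      · rw [if_pos rfl, one_div]
      · intro i _ hij; rw [if_neg hij, zero_div, zero_smul]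
      · intro h; exact absurd (Finset.mem_univ j) h
    rw [hsum] at hopt
    have h2 : ⟪(α j)⁻¹ • g j, Binv ((α j)⁻¹ • g j)⟫ ≤ ‖(α j)⁻¹ • g j‖ ^ 2 / a :=
      aux_inner_inv_le a B Binv ha hBa hinv1 _
    have h3 : ‖(α j)⁻¹ • g j‖ = ‖g j‖ / α j := by
      rw [norm_smul, Real.norm_eq_abs, abs_of_pos (inv_pos.mpr (hαpos j)),
        inv_mul_eq_div]
    have h5 : ‖(α j)⁻¹ • g j‖ ^ 2 ≤ M ^ 2 := by
      rw [h3]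
      exact pow_le_pow_left₀ (div_nonneg (norm_nonneg _) (hαpos j).le) (hMi j hjls) 2
    have h4 : ‖(α j)⁻¹ • g j‖ ^ 2 / a ≤ M ^ 2 / a :=
      (div_le_div_iff_of_pos_right ha).mpr h5
    linarith
  -- Step 2: bound on ‖w‖
  have hwnorm : ‖w‖ ≤ b / a * M := by
    have h1 : ‖w‖ ^ 2 ≤ b * ⟪w, Binv w⟫ := by
      have h := aux_norm_sq_le a b B ha hab hsym hBa hBb (Binv w)
      rw [hinv1] at h
      rwa [real_inner_comm] at h
    have hb : 0 < b := lt_of_lt_of_le ha hab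
    have h2 : ‖w‖ ^ 2 ≤ b / a * M ^ 2 := by
      calc ‖w‖ ^ 2 ≤ b * ⟪w, Binv w⟫ := h1
        _ ≤ b * (M ^ 2 / a) := by gcongr
        _ = b / a * M ^ 2 := by ring
    have hc1 : 1 ≤ b / a := (one_le_div ha).mpr hab
    nlinarith [norm_nonneg w, mul_nonneg (le_trans zero_le_one hc1) hM0]
  -- Step 3
  set s := ∑ i ∈ ls, lam i with hs
  have hs0 : 0 ≤ s := Finset.sum_nonneg fun i _ => hlam0 i
  rcases hs0.eq_or_lt with hseq | hspos
  · have hrhs : 0 ≤ αmin / ε * (1 + b / a) * M := by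
      have h1 : (0:ℝ) ≤ αmin / ε := le_of_lt (div_pos hαmin hε)
      have h2 : (0:ℝ) ≤ 1 + b / a := by
        have := div_pos (lt_of_lt_of_le ha hab) ha
        linarith
      exact mul_nonneg (mul_nonneg h1 h2) hM0
    linarith [hseq]
  · set p := ∑ i ∈ ls, lam i • g i with hp
    have hεp : s * ε ≤ ‖p‖ := by
      have h1 := hεlb (fun i => lam i / s)
        (fun i => div_nonneg (hlam0 i) hs0)
        (by rw [← Finset.sum_div, ← hs, div_self hspos.ne'])
      have h2 : ∑ i ∈ ls, (lam i / s) • g i = s⁻¹ • p := by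
        rw [hp, Finset.smul_sum]
        refine Finset.sum_congr rfl fun i _ => ?_
        rw [smul_smul, div_eq_inv_mul]
      rw [h2, norm_smul, Real.norm_eq_abs, abs_of_pos (inv_pos.mpr hspos)] at h1
      have h3 := mul_le_mul_of_nonneg_left h1 hspos.le
      rwa [← mul_assoc, mul_inv_cancel₀ hspos.ne', one_mul] at h3
    set r := ∑ i ∈ lsᶜ, (lam i / α i) • g i with hr
    have hwpr : w = αmin⁻¹ • p + r := by
      rw [hw, ← Finset.sum_add_sum_compl ls, hp, hr, Finset.smul_sum]
      congr 1
      refine Finset.sum_congr rfl fun i hi => ?_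
      rw [smul_smul, hα1 i hi, div_eq_inv_mul]
    have hrnorm : ‖r‖ ≤ M := by
      calc ‖r‖ ≤ ∑ i ∈ lsᶜ, ‖(lam i / α i) • g i‖ := norm_sum_le _ _
        _ = ∑ i ∈ lsᶜ, lam i / α i * ‖g i‖ := by
            refine Finset.sum_congr rfl fun i _ => ?_
            rw [norm_smul, Real.norm_eq_abs,
              abs_of_nonneg (div_nonneg (hlam0 i) (hαpos i).le)]
        _ ≤ ∑ i ∈ lsᶜ, lam i * M := by
            refine Finset.sum_le_sum fun i hi => ?_
            have := hMi i (Finset.mem_compl.mp hi)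
            have h1 : lam i / α i * ‖g i‖ = lam i * (‖g i‖ / α i) := by ring
            rw [h1]
            exact mul_le_mul_of_nonneg_left this (hlam0 i)
        _ = (∑ i ∈ lsᶜ, lam i) * M := (Finset.sum_mul _ _ _).symm
        _ ≤ 1 * M := by
            refine mul_le_mul_of_nonneg_right ?_ hM0
            rw [← hlam1]
            exact Finset.sum_le_sum_of_subset_of_nonneg (Finset.subset_univ _)
              (fun i _ _ => hlam0 i)
        _ = M := one_mul M
    have hpeq : p = αmin • (w - r) := by
      rw [hwpr]
      rw [add_sub_cancel_right, smul_smul, mul_inv_cancel₀ hαmin.ne', one_smul]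
    have hpnorm : ‖p‖ ≤ αmin * (‖w‖ + ‖r‖) := by
      rw [hpeq, norm_smul, Real.norm_eq_abs, abs_of_pos hαmin]
      exact mul_le_mul_of_nonneg_left (norm_sub_le _ _) hαmin.le
    have hfinal : s * ε ≤ αmin * (b / a * M + M) := by
      calc s * ε ≤ ‖p‖ := hεp
        _ ≤ αmin * (‖w‖ + ‖r‖) := hpnorm
        _ ≤ αmin * (b / a * M + M) := by
            refine mul_le_mul_of_nonneg_left ?_ hαmin.le
            linarith
    have heq : αmin / ε * (1 + b / a) * M = αmin * (b / a * M + M) / ε := by ring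
    rw [heq, le_div_iff₀ hε]
    exact hfinal
end

section
/- Let F : ℝ^n → ℝ^m be continuously differentiable, B a symmetric positive definite n×n real matrix, x ∈ ℝ^n, and 𝓛 ⊆ {1,…,m}. Suppose F_i is affine (i.e., ∇F_i is constant) for i ∈ 𝓛, and for i ∉ 𝓛, F_i is L_i-smooth and μ_i-strongly convex relative to ‖·‖_B with 0 < μ_i ≤ L_i. Let α_i > 0 for i ∈ 𝓛 and μ_i ≤ α_i ≤ L_i for i ∉ 𝓛, let d ≠ 0 be the unique minimizer over ℝ^n of d ↦ max_{i∈{1,…,m}} ⟨∇F_i(x), d⟩/α_i + (1/2)‖d‖_B², and let σ, γ ∈ (0,1). Suppose t ∈ (0,1] satisfies the Armijo condition at x in direction d, and either t = 1 or there exists an index i with F_i(x + (t/γ) d) − F_i(x) > σ (t/γ) ⟨∇F_i(x), d⟩. Then t ≥ min{1, 2γ(1−σ)·min_{i∉𝓛} μ_i/L_i}. -/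
set_option maxHeartbeats 1000000


open scoped RealInnerProductSpace

/-- Stepsize lower bound in the presence of affine objectives: if the
objectives in `𝓛` are affine (constant gradient) and the remaining ones are `L_i`-smooth
and `μ_i`-strongly convex relative to `‖·‖_B`, `d ≠ 0` minimizes the subproblem,
`t ∈ (0,1]` satisfies the Armijo condition and either `t = 1` or the Armijo condition
fails at stepsize `t/γ` for some index, then `t ≥ min{1, 2γ(1−σ)·min_{i∉𝓛} μ_i/L_i}`. -/
theorem stmt18 {n m : ℕ} [NeZero m] (F : Fin m → EuclideanSpace ℝ (Fin n) → ℝ)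
    (hF : ∀ i, ContDiff ℝ 1 (F i))
    (B : EuclideanSpace ℝ (Fin n) →ₗ[ℝ] EuclideanSpace ℝ (Fin n))
    (hsym : ∀ u v : EuclideanSpace ℝ (Fin n), ⟪B u, v⟫ = ⟪u, B v⟫)
    (hposdef : ∀ u : EuclideanSpace ℝ (Fin n), u ≠ 0 → 0 < ⟪u, B u⟫)
    (x : EuclideanSpace ℝ (Fin n))
    (ls : Finset (Fin m)) (hlsc : lsᶜ.Nonempty)
    (haff : ∀ i ∈ ls, ∀ y z : EuclideanSpace ℝ (Fin n),
      gradient (F i) y = gradient (F i) z)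
    (L μ : Fin m → ℝ) (hμ : ∀ i ∉ ls, 0 < μ i) (hμL : ∀ i ∉ ls, μ i ≤ L i)
    (hsmooth : ∀ i ∉ ls, ∀ y z : EuclideanSpace ℝ (Fin n),
      F i z ≤ F i y + ⟪gradient (F i) y, z - y⟫ + L i / 2 * ⟪z - y, B (z - y)⟫)
    (hsc : ∀ i ∉ ls, ∀ y z : EuclideanSpace ℝ (Fin n),
      F i y + ⟪gradient (F i) y, z - y⟫ + μ i / 2 * ⟪z - y, B (z - y)⟫ ≤ F i z)
    (α : Fin m → ℝ) (hα1 : ∀ i ∈ ls, 0 < α i)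
    (hα2 : ∀ i ∉ ls, μ i ≤ α i ∧ α i ≤ L i)
    (d : EuclideanSpace ℝ (Fin n)) (hd : d ≠ 0)
    (hdmin : ∀ e : EuclideanSpace ℝ (Fin n),
      (fmax fun i => ⟪gradient (F i) x, d⟫ / α i) + ⟪d, B d⟫ / 2 ≤
        (fmax fun i => ⟪gradient (F i) x, e⟫ / α i) + ⟪e, B e⟫ / 2)
    (σ γ : ℝ) (hσ : σ ∈ Set.Ioo (0 : ℝ) 1) (hγ : γ ∈ Set.Ioo (0 : ℝ) 1)
    (t : ℝ) (ht : t ∈ Set.Ioc (0 : ℝ) 1)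
    (harmijo : ∀ i, F i (x + t • d) - F i x ≤ σ * t * ⟪gradient (F i) x, d⟫)
    (hmaximal : t = 1 ∨ ∃ i, σ * (t / γ) * ⟪gradient (F i) x, d⟫ <
      F i (x + (t / γ) • d) - F i x) :
    min 1 (2 * γ * (1 - σ) * lsᶜ.inf' hlsc (fun i => μ i / L i)) ≤ t := by
  obtain ⟨hσ0, hσ1⟩ := hσ
  obtain ⟨hγ0, hγ1⟩ := hγ
  obtain ⟨ht0, ht1⟩ := ht
  rcases hmaximal with h1 | ⟨i, hi⟩
  · subst h1; exact min_le_left _ _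
  set q : ℝ := ⟪d, B d⟫ with hq
  have hq0 : 0 < q := hposdef d hd
  clear_value q
  have hα : ∀ j, 0 < α j := by
    intro j
    by_cases h : j ∈ ls
    · exact hα1 j h
    · exact lt_of_lt_of_le (hμ j h) (hα2 j h).1
  set f : Fin m → ℝ := fun j => ⟪gradient (F j) x, d⟫ / α j with hf
  have hfval : ∀ j, f j = ⟪gradient (F j) x, d⟫ / α j := fun j => rfl
  clear_value f
  set M : ℝ := fmax f with hM
  -- Step 1: M + q/2 ≤ 0
  have h0 : M + q / 2 ≤ 0 := by
    have h := hdmin 0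
    have e1 : (fun i => ⟪gradient (F i) x, (0 : EuclideanSpace ℝ (Fin n))⟫ / α i)
        = fun _ : Fin m => (0:ℝ) := by
      funext j; rw [inner_zero_right, zero_div]
    have e2 : ⟪(0 : EuclideanSpace ℝ (Fin n)), B 0⟫ = (0:ℝ) := by
      rw [map_zero, inner_zero_right]
    rw [e1, e2] at h
    have e3 : fmax (fun _ : Fin m => (0:ℝ)) = 0 := Finset.sup'_const _ _
    rw [e3] at h; linarith
  have hMneg : M < 0 := by linarith
  -- Step 2: M = -q
  set s : ℝ := -M / q with hs
  have hs0 : 0 < s := div_pos (by linarith) hq0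
  have hsq : s * q = -M := by rw [hs]; exact div_mul_cancel₀ _ hq0.ne'
  clear_value s
  have hMq : M = -q := by
    have hkey := hdmin (s • d)
    have hfs : (fun j => ⟪gradient (F j) x, s • d⟫ / α j) = fun j => s * f j := by
      funext j
      rw [hfval j, real_inner_smul_right, mul_div_assoc]
    have hsup : fmax (fun j => s * f j) = s * M := by
      apply le_antisymm
      · exact Finset.sup'_le _ _ fun j _ =>
          mul_le_mul_of_nonneg_left (Finset.le_sup' f (Finset.mem_univ j)) hs0.le
      · obtain ⟨j, _, hj⟩ := Finset.exists_mem_eq_sup' Finset.univ_nonempty f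
        have hMj : s * M = s * f j := by rw [hM, fmax, hj]
        rw [hMj]
        exact Finset.le_sup' (fun k => s * f k) (Finset.mem_univ j)
    have hBe : ⟪s • d, B (s • d)⟫ = s ^ 2 * q := by
      rw [map_smul, real_inner_smul_left, real_inner_smul_right, ← hq]; ring
    rw [hfs, hsup, hBe] at hkey
    have hM' : M = -(s * q) := by linarith
    have hsM : s * M = -(s ^ 2 * q) := by rw [hM']; ring
    have hss : (s - 1) ^ 2 * q ≤ 0 := by nlinarith [hkey, hsM]
    have hss2 : (s - 1) ^ 2 ≤ 0 := by nlinarith [hss, hq0]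
    have hss3 : (s - 1) ^ 2 = 0 := le_antisymm hss2 (sq_nonneg _)
    have hs1 : s = 1 := by
      have h4 := (pow_eq_zero_iff (by norm_num : (2:ℕ) ≠ 0)).mp hss3
      linarith
    rw [hs1, one_mul] at hsq
    linarith
  have hgd : ∀ j, ⟪gradient (F j) x, d⟫ ≤ -q * α j := by
    intro j
    have h : f j ≤ M := Finset.le_sup' f (Finset.mem_univ j)
    have h2 : f j ≤ -q := by rw [← hMq]; exact h
    rw [hfval j] at h2
    exact (div_le_iff₀ (hα j)).mp h2
  set t' : ℝ := t / γ with ht'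
  have ht'0 : 0 < t' := div_pos ht0 hγ0
  have htt : t' * γ = t := by rw [ht']; exact div_mul_cancel₀ t hγ0.ne'
  clear_value t'
  set c := gradient (F i) x with hc
  have hcd : ⟪c, d⟫ ≤ -q * α i := by rw [hc]; exact hgd i
  clear_value c
  have hcdneg : ⟪c, d⟫ < 0 :=
    lt_of_le_of_lt hcd (by nlinarith [mul_pos hq0 (hα i)])
  by_cases hils : i ∈ ls
  · -- affine case: contradiction
    exfalso
    have hconst : ∀ y, gradient (F i) y = c := fun y => (haff i hils y x).trans hc.symm
    have hdiff : Differentiable ℝ (F i) := (hF i).differentiable one_ne_zero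
    have hfd : ∀ y, HasFDerivAt (F i)
        ((InnerProductSpace.toDual ℝ (EuclideanSpace ℝ (Fin n)) c :
          EuclideanSpace ℝ (Fin n) →L[ℝ] ℝ)) y := by
      intro y
      have h1 : HasGradientAt (F i) c y := by
        have h2 := (hdiff y).hasGradientAt
        rwa [hconst y] at h2
      exact h1.hasFDerivAt
    set φ : EuclideanSpace ℝ (Fin n) →L[ℝ] ℝ :=
      (InnerProductSpace.toDual ℝ (EuclideanSpace ℝ (Fin n)) c :
        EuclideanSpace ℝ (Fin n) →L[ℝ] ℝ) with hφ
    have hg0 : ∀ y, HasFDerivAt (fun z => F i z - φ z)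
        (0 : EuclideanSpace ℝ (Fin n) →L[ℝ] ℝ) y := by
      intro y
      have h3 := (hfd y).sub φ.hasFDerivAt
      rw [sub_self] at h3
      exact h3
    have hgc : ∀ y z : EuclideanSpace ℝ (Fin n),
        F i y - φ y = F i z - φ z :=
      is_const_of_fderiv_eq_zero (fun y => (hg0 y).differentiableAt)
        (fun y => (hg0 y).fderiv)
    have heq : F i (x + t' • d) - F i x = t' * ⟪c, d⟫ := by
      have h := hgc (x + t' • d) x
      have hφ1 : φ (x + t' • d) = ⟪c, x⟫ + t' * ⟪c, d⟫ := by
        simp only [hφ, InnerProductSpace.toDual_apply_apply]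
        rw [inner_add_right, real_inner_smul_right]
      have hφ2 : φ x = ⟪c, x⟫ := by
        simp only [hφ, InnerProductSpace.toDual_apply_apply]
      rw [hφ1, hφ2] at h
      linarith
    rw [heq] at hi
    nlinarith [mul_pos (mul_pos (show (0:ℝ) < 1 - σ by linarith) ht'0)
      (neg_pos.mpr hcdneg)]
  · -- smooth case
    have hμ0 : 0 < μ i := hμ i hils
    have hL0 : 0 < L i := lt_of_lt_of_le hμ0 (hμL i hils)
    have hcd' : ⟪c, d⟫ ≤ -(μ i * q) := by
      have h1 := mul_le_mul_of_nonneg_left (hα2 i hils).1 hq0.le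
      linarith [h1, hcd]
    have hs' := hsmooth i hils x (x + t' • d)
    have hsub : x + t' • d - x = t' • d := add_sub_cancel_left x _
    rw [hsub] at hs'
    have e1 : ⟪gradient (F i) x, t' • d⟫ = t' * ⟪c, d⟫ := by
      rw [← hc, real_inner_smul_right]
    have e2 : ⟪t' • d, B (t' • d)⟫ = t' ^ 2 * q := by
      rw [map_smul, real_inner_smul_left, real_inner_smul_right, ← hq]; ring
    rw [e1, e2] at hs'
    obtain ⟨cd, hcd2⟩ : ∃ r : ℝ, ⟪c, d⟫ = r := ⟨_, rfl⟩
    rw [hcd2] at hs' hi hcd' hcdneg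
    have step1 : σ * t' * cd < t' * cd + L i / 2 * (t' ^ 2 * q) := by
      calc σ * t' * cd < F i (x + t' • d) - F i x := hi
        _ ≤ t' * cd + L i / 2 * (t' ^ 2 * q) := by linarith
    have step3 : (1 - σ) * (μ i * q) * t' ≤ (1 - σ) * (-cd) * t' := by
      apply mul_le_mul_of_nonneg_right _ ht'0.le
      apply mul_le_mul_of_nonneg_left (by linarith) (by linarith)
    have step4 : (1 - σ) * (μ i * q) * t' < L i / 2 * t' ^ 2 * q := by
      linarith only [step1, step3]
    have step6 : (1 - σ) * μ i < L i / 2 * t' := by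
      nlinarith only [step4, mul_pos ht'0 hq0]
    have hdiv : μ i / L i * L i = μ i := div_mul_cancel₀ _ hL0.ne'
    have hr : 2 * (1 - σ) * (μ i / L i) < t' := by
      rw [show 2 * (1 - σ) * (μ i / L i) = 2 * (1 - σ) * μ i / L i by ring,
        div_lt_iff₀ hL0]
      nlinarith only [step6]
    have hfin : 2 * γ * (1 - σ) * (μ i / L i) < t := by
      nlinarith only [mul_lt_mul_of_pos_left hr hγ0, htt, hγ0]
    have hinf : lsᶜ.inf' hlsc (fun j => μ j / L j) ≤ μ i / L i :=
      Finset.inf'_le _ (Finset.mem_compl.mpr hils)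
    have hfactor : (0:ℝ) ≤ 2 * γ * (1 - σ) := by nlinarith only [hγ0, hσ1]
    calc min 1 (2 * γ * (1 - σ) * lsᶜ.inf' hlsc (fun j => μ j / L j))
        ≤ 2 * γ * (1 - σ) * lsᶜ.inf' hlsc (fun j => μ j / L j) := min_le_right _ _
      _ ≤ 2 * γ * (1 - σ) * (μ i / L i) := mul_le_mul_of_nonneg_left hinf hfactor
      _ ≤ t := hfin.le
end

section
/- Let B be a symmetric positive definite n×n real matrix, g_1,…,g_m ∈ ℝ^n, α_1,…,α_m > 0, and 𝓛 a proper subset of {1,…,m}. Let λ ∈ Δ_m be a minimizer over Δ_m of λ ↦ (1/2)⟨Σ_{i=1}^m λ_i g_i/α_i, B^{-1}(Σ_{i=1}^m λ_i g_i/α_i)⟩, and suppose s := Σ_{i∉𝓛} λ_i > 0. Then inf_{d∈ℝ^n} max_{i∈{1,…,m}} [ ⟨g_i, d⟩/α_i + (𝟙[i∉𝓛]/2)‖d‖_B² ] ≥ (1/s) · min_{d∈ℝ^n} max_{i∈{1,…,m}} [ ⟨g_i, d⟩/α_i + (1/2)‖d‖_B² ], where 𝟙[i∉𝓛] equals 1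 if i ∉ 𝓛 and 0 if i ∈ 𝓛. -/
open scoped RealInnerProductSpace

/-- If `λ` minimizes the dual objective
`λ ↦ ⟨∑ λ_i g_i/α_i, B⁻¹(∑ λ_i g_i/α_i)⟩/2` over the unit simplex and
`s = ∑_{i∉𝓛} λ_i > 0`, then
`inf_d max_i [⟨g_i, d⟩/α_i + (𝟙[i∉𝓛]/2)‖d‖_B²] ≥ (1/s)·min_d max_i [⟨g_i, d⟩/α_i + ‖d‖_B²/2]`. -/
theorem stmt19 {n m : ℕ} [NeZero m]
    (B Binv : EuclideanSpace ℝ (Fin n) →ₗ[ℝ] EuclideanSpace ℝ (Fin n))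
    (hsym : ∀ u v : EuclideanSpace ℝ (Fin n), ⟪B u, v⟫ = ⟪u, B v⟫)
    (hposdef : ∀ u : EuclideanSpace ℝ (Fin n), u ≠ 0 → 0 < ⟪u, B u⟫)
    (hinv1 : ∀ u, B (Binv u) = u) (hinv2 : ∀ u, Binv (B u) = u)
    (g : Fin m → EuclideanSpace ℝ (Fin n)) (α : Fin m → ℝ) (hα : ∀ i, 0 < α i)
    (ls : Finset (Fin m)) (hproper : ls ≠ Finset.univ)
    (lam : Fin m → ℝ) (hlam0 : ∀ i, 0 ≤ lam i) (hlam1 : ∑ i, lam i = 1)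
    (hlamMin : ∀ lam' : Fin m → ℝ, (∀ i, 0 ≤ lam' i) → ∑ i, lam' i = 1 →
      ⟪∑ i, (lam i / α i) • g i, Binv (∑ i, (lam i / α i) • g i)⟫ / 2 ≤
        ⟪∑ i, (lam' i / α i) • g i, Binv (∑ i, (lam' i / α i) • g i)⟫ / 2)
    (s : ℝ) (hs : s = ∑ i ∈ lsᶜ, lam i) (hspos : 0 < s) :
    (1 / s) * (⨅ d : EuclideanSpace ℝ (Fin n),
        ((fmax fun i => ⟪g i, d⟫ / α i) + ⟪d, B d⟫ / 2)) ≤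
      ⨅ d : EuclideanSpace ℝ (Fin n),
        fmax fun i => ⟪g i, d⟫ / α i + (if i ∈ ls then 0 else ⟪d, B d⟫ / 2) := by
  classical
  set gbar : EuclideanSpace ℝ (Fin n) := ∑ i, (lam i / α i) • g i with hgbar
  set Q : ℝ := ⟪gbar, Binv gbar⟫ with hQ
  have hpos' : ∀ u : EuclideanSpace ℝ (Fin n), (0:ℝ) ≤ ⟪u, B u⟫ := by
    intro u
    rcases eq_or_ne u 0 with h | h
    · simp [h]
    · exact (hposdef u h).le
  have hsyminv : ∀ u v : EuclideanSpace ℝ (Fin n), ⟪Binv u, v⟫ = ⟪u, Binv v⟫ := by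
    intro u v
    conv_lhs => rw [← hinv1 v]
    rw [← hsym, hinv1]
  -- completing the square
  have hsquare : ∀ (h : EuclideanSpace ℝ (Fin n)) (c : ℝ), 0 < c →
      ∀ d : EuclideanSpace ℝ (Fin n),
        -(⟪h, Binv h⟫ / (2 * c)) ≤ ⟪h, d⟫ + c * ⟪d, B d⟫ / 2 := by
    intro h c hc d
    have h0 := hpos' (d + c⁻¹ • Binv h)
    have e1 : ⟪Binv h, B d⟫ = ⟪h, d⟫ := by rw [hsyminv, hinv2]
    have e2 : ⟪Binv h, h⟫ = ⟪h, Binv h⟫ := real_inner_comm _ _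
    have e3 : ⟪d, h⟫ = ⟪h, d⟫ := real_inner_comm _ _
    have hexp : ⟪d + c⁻¹ • Binv h, B (d + c⁻¹ • Binv h)⟫
        = ⟪d, B d⟫ + c⁻¹ * ⟪h, d⟫ + (c⁻¹ * ⟪h, d⟫ + c⁻¹ * (c⁻¹ * ⟪h, Binv h⟫)) := by
      rw [map_add, map_smul]
      simp only [inner_add_left, inner_add_right, real_inner_smul_left, real_inner_smul_right,
        hinv1, e1, e2, e3]
    rw [hexp] at h0
    have hcne : c ≠ 0 := ne_of_gt hc
    have k2 : 0 ≤ c^2 * (⟪d, B d⟫ + c⁻¹ * ⟪h, d⟫ + (c⁻¹ * ⟪h, d⟫ + c⁻¹ * (c⁻¹ * ⟪h, Binv h⟫))) :=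
      mul_nonneg (sq_nonneg c) h0
    have k3 : (0:ℝ) ≤ c^2 * ⟪d, B d⟫ + 2 * c * ⟪h, d⟫ + ⟪h, Binv h⟫ := by
      have : c^2 * (⟪d, B d⟫ + c⁻¹ * ⟪h, d⟫ + (c⁻¹ * ⟪h, d⟫ + c⁻¹ * (c⁻¹ * ⟪h, Binv h⟫)))
          = c^2 * ⟪d, B d⟫ + 2 * c * ⟪h, d⟫ + ⟪h, Binv h⟫ := by
        field_simp
        ring
      rw [this] at k2
      exact k2
    have h2c : (0:ℝ) < 2 * c := by linarith
    rw [neg_le, ← sub_nonneg]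
    have : ⟪h, Binv h⟫ / (2 * c) - -(⟪h, d⟫ + c * ⟪d, B d⟫ / 2)
        = (c^2 * ⟪d, B d⟫ + 2 * c * ⟪h, d⟫ + ⟪h, Binv h⟫) / (2 * c) := by
      field_simp
      ring
    rw [this]
    exact div_nonneg k3 h2c.le
  -- KKT condition from minimality of lam
  have hC : ∀ i : Fin m, Q ≤ ⟪(α i)⁻¹ • g i, Binv gbar⟫ := by
    intro i
    set h : EuclideanSpace ℝ (Fin n) := (α i)⁻¹ • g i with hh
    set C : ℝ := ⟪h, Binv gbar⟫ with hCdef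
    set D : ℝ := ⟪h, Binv h⟫ with hDdef
    by_contra hlt
    push_neg at hlt
    set K : ℝ := Q - 2 * C + D with hK
    set ε : ℝ := Q - C with hε
    have hεpos : 0 < ε := by simp only [hε]; linarith
    set t : ℝ := min 1 (ε / (|K| + 1)) with ht
    have hK1 : (0:ℝ) < |K| + 1 := by positivity
    have ht0 : 0 < t := lt_min one_pos (div_pos hεpos hK1)
    have ht1 : t ≤ 1 := min_le_left _ _
    set lam' : Fin m → ℝ := fun j => (1 - t) * lam j + t * (if j = i then 1 else 0) with hlam'
    have h1 : ∀ j, 0 ≤ lam' j := by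
      intro j
      have := hlam0 j
      simp only [hlam']
      split <;> nlinarith
    have h2 : ∑ j, lam' j = 1 := by
      simp only [hlam', Finset.sum_add_distrib, ← Finset.mul_sum, hlam1, mul_ite, mul_one,
        mul_zero, Finset.sum_ite_eq', Finset.mem_univ, if_true]
      ring
    have hsum' : ∑ j, (lam' j / α j) • g j = (1 - t) • gbar + t • h := by
      have : ∀ j ∈ Finset.univ, (lam' j / α j) • g j
          = (1 - t) • ((lam j / α j) • g j) + (if j = i then t • h else 0) := by
        intro j _
        simp only [hlam', hh]
        rcases eq_or_ne j i with hji | hji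
        · subst hji
          simp only [eq_self_iff_true, if_true, mul_one]
          rw [div_eq_mul_inv, div_eq_mul_inv]
          module
        · simp only [if_neg hji, mul_zero, add_zero, add_smul, add_div]
          rw [div_eq_mul_inv, div_eq_mul_inv]
          module
      rw [Finset.sum_congr rfl this, Finset.sum_add_distrib, ← Finset.smul_sum,
        Finset.sum_ite_eq' Finset.univ i (fun _ => t • h), if_pos (Finset.mem_univ i), ← hgbar]
    have hmin := hlamMin lam' h1 h2
    rw [hsum'] at hmin
    have eC : ⟪gbar, Binv h⟫ = C := by rw [← hsyminv]; exact real_inner_comm _ _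
    have hexp : ⟪(1 - t) • gbar + t • h, Binv ((1 - t) • gbar + t • h)⟫
        = (1 - t)^2 * Q + 2 * t * (1 - t) * C + t^2 * D := by
      rw [map_add, map_smul, map_smul]
      simp only [inner_add_left, inner_add_right, real_inner_smul_left, real_inner_smul_right,
        eC, ← hQ, ← hCdef, ← hDdef]
      ring
    rw [hexp] at hmin
    have htle : t ≤ ε / (|K| + 1) := min_le_right _ _
    clear_value t K ε C D Q gbar
    -- 0 ≤ t * (t * K - 2 * ε)
    have hmin2 : 0 ≤ t * (t * K - 2 * ε) := by
      have heq : t * (t * K - 2 * ε) = ((1 - t)^2 * Q + 2 * t * (1 - t) * C + t^2 * D) - Q := by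
        simp only [hK, hε]; ring
      linarith [hmin, heq.ge, heq.le]
    clear hmin hexp hsum' h1 h2 eC hCdef hDdef hh hlamMin hgbar hQ hlam' hK hε ht
    clear_value lam' h
    clear lam' h hlam0 hlam1 hs hspos hsquare hpos' hsyminv hsym hposdef hinv1 hinv2
    have hfac : 0 ≤ t * K - 2 * ε := by
      by_contra hneg
      push_neg at hneg
      exact absurd hmin2 (not_le.mpr (mul_neg_of_pos_of_neg ht0 hneg))
    have c1 : t * K ≤ t * |K| := mul_le_mul_of_nonneg_left (le_abs_self K) ht0.le
    have c2 : t * |K| ≤ (ε / (|K| + 1)) * |K| :=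
      mul_le_mul_of_nonneg_right htle (abs_nonneg K)
    have c3 : (ε / (|K| + 1)) * |K| < ε := by
      rw [div_mul_eq_mul_div, div_lt_iff₀ hK1]
      have h4 := mul_lt_mul_of_pos_left (lt_add_one |K|) hεpos
      linarith
    linarith
  have hC' : ∀ i : Fin m, Q ≤ ⟪g i, Binv gbar⟫ / α i := by
    intro i
    have h := hC i
    rwa [real_inner_smul_left, ← div_eq_inv_mul] at h
  have hQnn : (0:ℝ) ≤ Q := by
    have e : ⟪Binv gbar, B (Binv gbar)⟫ = Q := by
      rw [hinv1, hQ]; exact real_inner_comm _ _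
    linarith [hpos' (Binv gbar), e.le, e.ge]
  clear_value gbar Q
  have hbdd : BddBelow (Set.range fun d : EuclideanSpace ℝ (Fin n) =>
      (fmax fun i => ⟪g i, d⟫ / α i) + ⟪d, B d⟫ / 2) := by
    refine ⟨-(⟪(α 0)⁻¹ • g 0, Binv ((α 0)⁻¹ • g 0)⟫ / (2 * 1)), ?_⟩
    rintro x ⟨d, rfl⟩
    have h1 := hsquare ((α 0)⁻¹ • g 0) 1 one_pos d
    have h2 : ⟪(α 0 : ℝ)⁻¹ • g (0 : Fin m), d⟫ = ⟪g (0 : Fin m), d⟫ / α 0 := by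
      rw [real_inner_smul_left, div_eq_inv_mul]
    have h3 : ⟪g (0 : Fin m), d⟫ / α 0 ≤ fmax fun i => ⟪g i, d⟫ / α i := by
      exact Finset.le_sup' (fun i => ⟪g i, d⟫ / α i) (Finset.mem_univ 0)
    rw [h2] at h1
    simp only []
    linarith
  have hderiv : (⨅ d : EuclideanSpace ℝ (Fin n),
      ((fmax fun i => ⟪g i, d⟫ / α i) + ⟪d, B d⟫ / 2)) ≤ -(Q / 2) := by
    refine (ciInf_le hbdd (-(Binv gbar))).trans ?_
    have hmaxle : (fmax fun i => ⟪g i, -(Binv gbar)⟫ / α i) ≤ -Q := by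
      apply Finset.sup'_le
      intro i _
      have h := hC' i
      rw [inner_neg_right, neg_div]
      linarith
    have hBval : ⟪-(Binv gbar), B (-(Binv gbar))⟫ = Q := by
      rw [map_neg, inner_neg_neg, hinv1, hQ]; exact real_inner_comm _ _
    rw [hBval]
    linarith
  have hrhs : -(Q / (2 * s)) ≤ ⨅ d : EuclideanSpace ℝ (Fin n),
      fmax fun i => ⟪g i, d⟫ / α i + (if i ∈ ls then 0 else ⟪d, B d⟫ / 2) := by
    apply le_ciInf
    intro d
    set F : Fin m → ℝ := fun i => ⟪g i, d⟫ / α i + (if i ∈ ls then 0 else ⟪d, B d⟫ / 2)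
      with hF
    have hs1 : ∑ i, lam i * F i ≤ fmax F := by
      calc ∑ i, lam i * F i ≤ ∑ i, lam i * fmax F :=
            Finset.sum_le_sum fun i _ =>
              mul_le_mul_of_nonneg_left (Finset.le_sup' _ (Finset.mem_univ i)) (hlam0 i)
        _ = fmax F := by rw [← Finset.sum_mul, hlam1, one_mul]
    have hs2 : ∑ i, lam i * F i = ⟪gbar, d⟫ + s * ⟪d, B d⟫ / 2 := by
      have estep : ∀ i ∈ Finset.univ, lam i * F i
          = (lam i / α i) * ⟪g i, d⟫
            + (if i ∈ lsᶜ then lam i * (⟪d, B d⟫ / 2) else 0) := by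
        intro i _
        by_cases hi : i ∈ ls <;>
          simp [hF, hi, mul_add, mul_div_assoc, mul_comm, mul_left_comm, div_mul_eq_mul_div]
      rw [Finset.sum_congr rfl estep, Finset.sum_add_distrib]
      have eL : ∑ i, (lam i / α i) * ⟪g i, d⟫ = ⟪gbar, d⟫ := by
        rw [hgbar, sum_inner]
        exact Finset.sum_congr rfl fun i _ => (real_inner_smul_left _ _ _).symm
      have eR : ∑ i, (if i ∈ lsᶜ then lam i * (⟪d, B d⟫ / 2) else 0)
          = s * ⟪d, B d⟫ / 2 := by
        rw [Finset.sum_ite_mem, Finset.univ_inter, hs, mul_div_assoc, Finset.sum_mul]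
      rw [eL, eR]
    have hs3 := hsquare gbar s hspos d
    rw [← hQ] at hs3
    linarith
  have hsne : s ≠ 0 := ne_of_gt hspos
  have hfrac : (1 / s) * (-(Q / 2)) = -(Q / (2 * s)) := by
    rw [mul_neg, one_div, ← div_eq_inv_mul, div_div]
  calc (1 / s) * (⨅ d : EuclideanSpace ℝ (Fin n),
        ((fmax fun i => ⟪g i, d⟫ / α i) + ⟪d, B d⟫ / 2))
      ≤ (1 / s) * (-(Q / 2)) := by
        apply mul_le_mul_of_nonneg_left hderiv
        positivity
    _ = -(Q / (2 * s)) := hfrac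
    _ ≤ _ := hrhs
end
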